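/- arXiv:1203.3773 — 6 statements merged into one kernel-verified Lean document; each statement's English description precedes it below -/
import Mathlib

section
/- Let A be a d×d real matrix with tr A = 0 and let f : ℝ^d → ℝ be continuously differentiable. Define ρ : ℝ^d × ℝ^d → ℝ by ρ(q,v) = f(v − A q). Then ρ is a stationary solution of the Liouville equation of the dynamics dq/dt = v, dv/dt = A v: for every (q,v) ∈ ℝ^d × ℝ^d, ∑_{i=1}^d ∂/∂q_i (v_i ρ(q,v)) + ∑_{i=1}^d ∂/∂v_i ((A v)_i ρ(q,v)) = 0. -/
/-- The partial derivative of `g : ℝ^d → ℝ` at `x` with respect to the `i`-th coordinate. -/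
noncomputable def partialDeriv' {d : ℕ} (i : Fin d) (g : (Fin d → ℝ) → ℝ)
    (x : Fin d → ℝ) : ℝ :=
  deriv (fun t => g (Function.update x i t)) (x i)

/-- If `tr A = 0`, then `ρ(q,v) = f(v − A q)` is a stationary solution of the Liouville
equation of the dynamics `dq/dt = v`, `dv/dt = A v`:
`∑ᵢ ∂/∂qᵢ (vᵢ ρ) + ∑ᵢ ∂/∂vᵢ ((A v)ᵢ ρ) = 0`. -/
theorem liouville_stationary_linear_background_flow
    (d : ℕ) (hd : 1 ≤ d)
    (A : Matrix (Fin d) (Fin d) ℝ) (hA : A.trace = 0)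
    (f : (Fin d → ℝ) → ℝ) (hf : ContDiff ℝ 1 f) :
    ∀ q v : Fin d → ℝ,
      (∑ i, partialDeriv' i (fun q' => v i * f (v - A.mulVec q')) q) +
      (∑ i, partialDeriv' i (fun v' => A.mulVec v' i * f (v' - A.mulVec q)) v) = 0 := by
  intro q v
  set w := v - A.mulVec q with hw
  have hfd : DifferentiableAt ℝ f w := (hf.differentiable one_ne_zero).differentiableAt
  set L := fderiv ℝ f w with hL
  have hLf : HasFDerivAt f L w := hfd.hasFDerivAt
  have hupd : ∀ (x : Fin d → ℝ) (i : Fin d) (t : ℝ),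
      Function.update x i t = x + (t - x i) • (Pi.single i 1 : Fin d → ℝ) := by
    intro x i t
    funext j
    by_cases h : j = i
    · subst h; simp
    · simp [Function.update_of_ne h, Pi.single_apply, h]
  have h1 : ∀ i : Fin d,
      partialDeriv' i (fun q' => v i * f (v - A.mulVec q')) q
        = v i * L (-(A.mulVec (Pi.single i 1))) := by
    intro i
    have hφ : HasDerivAt (fun t => v - A.mulVec (Function.update q i t))
        (-(A.mulVec (Pi.single i 1))) (q i) := by
      have heq : (fun t => v - A.mulVec (Function.update q i t))
          = fun t => w - (t - q i) • A.mulVec (Pi.single i 1) := by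
        funext t
        rw [hupd q i t]
        simp only [Matrix.mulVec_add, Matrix.mulVec_smul, hw]
        abel
      rw [heq]
      have hd1 : HasDerivAt (fun t : ℝ => t - q i) 1 (q i) :=
        (hasDerivAt_id _).sub_const _
      have := (hd1.smul_const (A.mulVec (Pi.single i 1))).const_sub w
      simpa using this
    have hLf' : HasFDerivAt f L
        ((fun t => v - A.mulVec (Function.update q i t)) (q i)) := by
      simpa [Function.update_eq_self, hw] using hLf
    have hcomp := hLf'.comp_hasDerivAt (q i) hφ
    have hmul := hcomp.const_mul (v i)
    exact hmul.deriv
  have h2 : ∀ i : Fin d,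
      partialDeriv' i (fun v' => A.mulVec v' i * f (v' - A.mulVec q)) v
        = A i i * f w + A.mulVec v i * L (Pi.single i 1) := by
    intro i
    have hu : HasDerivAt (fun t => A.mulVec (Function.update v i t) i)
        (A i i) (v i) := by
      have heq : (fun t => A.mulVec (Function.update v i t) i)
          = fun t => A.mulVec v i + (t - v i) * (A.mulVec (Pi.single i 1) i) := by
        funext t
        rw [hupd v i t]
        simp [Matrix.mulVec_add, Matrix.mulVec_smul]
      rw [heq]
      have hd1 : HasDerivAt (fun t : ℝ => t - v i) 1 (v i) :=
        (hasDerivAt_id _).sub_const _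
      have hs : A.mulVec (Pi.single i 1) i = A i i := by
        simp [Matrix.mulVec_single]
      have := (hd1.mul_const (A.mulVec (Pi.single i 1) i)).const_add (A.mulVec v i)
      simpa [hs] using this
    have hψ : HasDerivAt (fun t => Function.update v i t - A.mulVec q)
        (Pi.single i 1) (v i) := by
      have heq : (fun t => Function.update v i t - A.mulVec q)
          = fun t => w + (t - v i) • (Pi.single i 1 : Fin d → ℝ) := by
        funext t
        rw [hupd v i t, hw]
        abel
      rw [heq]
      have hd1 : HasDerivAt (fun t : ℝ => t - v i) 1 (v i) :=
        (hasDerivAt_id _).sub_const _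
      have := (hd1.smul_const (Pi.single i 1 : Fin d → ℝ)).const_add w
      simpa using this
    have hLf' : HasFDerivAt f L
        ((fun t => Function.update v i t - A.mulVec q) (v i)) := by
      simpa [Function.update_eq_self, hw] using hLf
    have hg := hLf'.comp_hasDerivAt (v i) hψ
    have hmul := hu.mul hg
    have : partialDeriv' i (fun v' => A.mulVec v' i * f (v' - A.mulVec q)) v
        = A i i * f (Function.update v i (v i) - A.mulVec q)
          + A.mulVec v i * L (Pi.single i 1) := by
      have := hmul.deriv
      simpa [partialDeriv', Function.update_eq_self, hw, Pi.mul_def, Function.comp_def] using this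
    simpa [Function.update_eq_self, hw] using this
  have hsingle : ∀ x : Fin d → ℝ, ∑ i, x i • (Pi.single i 1 : Fin d → ℝ) = x := by
    intro x
    funext j
    simp [Finset.sum_apply, Pi.single_apply]
  have hsumL : ∀ (c : Fin d → (Fin d → ℝ)) (x : Fin d → ℝ),
      ∑ i, x i * L (c i) = L (∑ i, x i • c i) := by
    intro c x
    rw [map_sum]
    simp
  have hAv : ∑ i, v i • A.mulVec (Pi.single i 1) = A.mulVec v := by
    have h := map_sum (Matrix.mulVecLin A)
      (fun i => v i • (Pi.single i 1 : Fin d → ℝ)) Finset.univ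
    simp only [map_smul, Matrix.mulVecLin_apply] at h
    rw [← h, hsingle]
  calc (∑ i, partialDeriv' i (fun q' => v i * f (v - A.mulVec q')) q) +
      (∑ i, partialDeriv' i (fun v' => A.mulVec v' i * f (v' - A.mulVec q)) v)
      = (∑ i, v i * L (-(A.mulVec (Pi.single i 1)))) +
        (∑ i, (A i i * f w + A.mulVec v i * L (Pi.single i 1))) := by
        rw [Finset.sum_congr rfl fun i _ => h1 i, Finset.sum_congr rfl fun i _ => h2 i]
    _ = -L (A.mulVec v) + ((A.trace) * f w + L (A.mulVec v)) := by
        congr 1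
        · have : (∑ i, v i * L (-(A.mulVec (Pi.single i 1))))
              = -(∑ i, v i * L (A.mulVec (Pi.single i 1))) := by
            simp [mul_neg]
          rw [this, hsumL, hAv]
        · rw [Finset.sum_add_distrib, ← Finset.sum_mul, hsumL, hsingle]
          rfl
    _ = 0 := by rw [hA]; ring
end

section
/- Let u : ℝ^d → ℝ^d be continuously differentiable and divergence-free (∑_{i=1}^d ∂u_i/∂q_i (q) = 0 for all q), and let f : ℝ^d → ℝ be continuously differentiable. Define ρ(q,v) = f(v − u(q)). Then for every (q,v) ∈ ℝ^d × ℝ^d, ∑_{i=1}^d ∂/∂q_i (v_i ρ(q,v)) + ∑_{i=1}^d ∂/∂v_i ((∇u(q) v)_i ρ(q,v)) = 0, where ∇u(q) denotes the Jacobian matrix of u at q; that is, ρ is a stationary solution of the Liouville equation of the dynamics dq/dt = v, dv/dt = ∇u(q) v. -/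
lemma partialDeriv'_of_hasFDerivAt {d : ℕ} (i : Fin d) {g : (Fin d → ℝ) → ℝ}
    {x : Fin d → ℝ} {L : (Fin d → ℝ) →L[ℝ] ℝ} (hg : HasFDerivAt g L x) :
    partialDeriv' i g x = L (Pi.single i 1) := by
  have hupd : HasDerivAt (Function.update x i) (Pi.single i 1) (x i) :=
    hasDerivAt_update x i (x i)
  have hg' : HasFDerivAt g L (Function.update x i (x i)) := by
    rwa [Function.update_eq_self]
  exact (hg'.comp_hasDerivAt (x i) hupd).deriv

lemma clm_apply_eq_sum {d : ℕ} (L : (Fin d → ℝ) →L[ℝ] ℝ) (z : Fin d → ℝ) :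
    L z = ∑ i, z i * L (Pi.single i 1) := by
  conv_lhs => rw [← Finset.univ_sum_single z]
  rw [map_sum]
  refine Finset.sum_congr rfl fun i _ => ?_
  have h : Pi.single i (z i) = z i • (Pi.single i 1 : Fin d → ℝ) := by
    ext j
    by_cases hj : j = i <;> simp [hj, Pi.single_apply]
  rw [h, map_smul, smul_eq_mul]

/-- If `u` is a `C¹` divergence-free vector field, then `ρ(q,v) = f(v − u(q))` is a
stationary solution of the Liouville equation of the dynamics `dq/dt = v`,
`dv/dt = ∇u(q) v`: `∑ᵢ ∂/∂qᵢ (vᵢ ρ) + ∑ᵢ ∂/∂vᵢ ((∇u(q) v)ᵢ ρ) = 0`, where the Jacobian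
`∇u(q)` applied to `v` is the directional derivative `fderiv ℝ u q v`. -/
theorem liouville_stationary_incompressible_background_flow
    (d : ℕ) (hd : 1 ≤ d)
    (u : (Fin d → ℝ) → Fin d → ℝ) (hu : ContDiff ℝ 1 u)
    (hdiv : ∀ q : Fin d → ℝ, (∑ i, fderiv ℝ (fun q' => u q' i) q (Pi.single i 1)) = 0)
    (f : (Fin d → ℝ) → ℝ) (hf : ContDiff ℝ 1 f) :
    ∀ q v : Fin d → ℝ,
      (∑ i, partialDeriv' i (fun q' => v i * f (v - u q')) q) +
      (∑ i, partialDeriv' i (fun v' => (fderiv ℝ u q v') i * f (v' - u q)) v) = 0 := by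
  intro q v
  have hud : Differentiable ℝ u := hu.differentiable one_ne_zero
  have hfd : Differentiable ℝ f := hf.differentiable one_ne_zero
  set w : Fin d → ℝ := v - u q with hw
  set U : (Fin d → ℝ) →L[ℝ] (Fin d → ℝ) := fderiv ℝ u q with hU
  set F : (Fin d → ℝ) →L[ℝ] ℝ := fderiv ℝ f w with hF
  have hFUv : F (U v) = ∑ i, v i * F (U (Pi.single i 1)) := by
    have := clm_apply_eq_sum (F.comp U) v
    simpa using this
  -- first sum
  have h1 : HasFDerivAt (fun q' => v - u q') (-U) q := by
    simpa using (hasFDerivAt_const v q).sub (hud q).hasFDerivAt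
  have h2 : HasFDerivAt (fun q' => f (v - u q')) (F.comp (-U)) q :=
    (hfd w).hasFDerivAt.comp q h1
  have hsum1 : (∑ i, partialDeriv' i (fun q' => v i * f (v - u q')) q)
      = - F (U v) := by
    have hterm : ∀ i : Fin d, partialDeriv' i (fun q' => v i * f (v - u q')) q
        = -(v i * F (U (Pi.single i 1))) := by
      intro i
      rw [partialDeriv'_of_hasFDerivAt i (h2.const_mul (v i))]
      simp [mul_comm]
    rw [Finset.sum_congr rfl fun i _ => hterm i, Finset.sum_neg_distrib, hFUv]
  -- second sum
  have hproj : ∀ (i : Fin d) (z : Fin d → ℝ),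
      fderiv ℝ (fun q' => u q' i) q z = U z i := by
    intro i z
    have := (hasFDerivAt_pi'.1 (hud q).hasFDerivAt i).fderiv
    rw [this]; rfl
  have hsum2 : (∑ i, partialDeriv' i (fun v' => (fderiv ℝ u q v') i * f (v' - u q)) v)
      = F (U v) := by
    have h3 : HasFDerivAt (fun v' : Fin d → ℝ => v' - u q)
        (ContinuousLinearMap.id ℝ (Fin d → ℝ)) v :=
      (hasFDerivAt_id v).sub_const (u q)
    have h4 : HasFDerivAt (fun v' => f (v' - u q))
        (F.comp (ContinuousLinearMap.id ℝ (Fin d → ℝ))) v :=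
      (hfd w).hasFDerivAt.comp v h3
    have hterm : ∀ i : Fin d,
        partialDeriv' i (fun v' => (fderiv ℝ u q v') i * f (v' - u q)) v
        = U v i * F (Pi.single i 1) + f w * U (Pi.single i 1) i := by
      intro i
      have hP : HasFDerivAt (fun v' : Fin d → ℝ => (fderiv ℝ u q v') i)
          ((ContinuousLinearMap.proj i).comp U) v :=
        ((ContinuousLinearMap.proj (R := ℝ) (φ := fun _ : Fin d => ℝ) i).comp U).hasFDerivAt
      have := partialDeriv'_of_hasFDerivAt i (g := fun v' => (fderiv ℝ u q v') i * f (v' - u q)) (hP.mul h4)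
      rw [this]
      simp [mul_comm]
      rfl
    rw [Finset.sum_congr rfl fun i _ => hterm i, Finset.sum_add_distrib,
      ← Finset.mul_sum]
    have hdiv' : (∑ i, U (Pi.single i 1) i) = 0 := by
      have := hdiv q
      rw [Finset.sum_congr rfl fun i _ => hproj i (Pi.single i 1)] at this
      exact this
    rw [hdiv', mul_zero, add_zero, clm_apply_eq_sum F (U v)]
  rw [hsum1, hsum2]
  ring
end

section
/- Let d ≥ 1, let A be a d×d real matrix with tr A = 0, and let M, β, γ, σ > 0 satisfy the fluctuation–dissipation relation γ = σ² β / 2. Define ρ : ℝ^d × ℝ^d → ℝ by ρ(Q,V) = exp(−(β M / 2) |V − A Q|²). Then ρ is a stationary solution of the Fokker–Planck equation associated with the dynamics dQ = V dt, M dV = M A V dt − γ (V − A Q) dt + σ dW: for every (Q,V) ∈ ℝ^d × ℝ^d, ∑_{i=1}^d ∂/∂Q_i (V_i ρ) + ∑_{i=1}^d ∂/∂V_i ( [ (A V)_i − (γ/M)(V − A Q)_i ] ρ ) = (σ²/(2M²)) ∑_{i=1}^d ∂²ρ/∂V_i². -/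
lemma affine_exp_hasDerivAt {d : ℕ} (c p q : ℝ) (a b : Fin d → ℝ) (t : ℝ) :
    HasDerivAt (fun s => (p + q * s) * Real.exp (-c * ∑ j, (a j + b j * s) ^ 2))
      (q * Real.exp (-c * ∑ j, (a j + b j * t) ^ 2) +
        (p + q * t) * (Real.exp (-c * ∑ j, (a j + b j * t) ^ 2) *
          (-c * ∑ j, 2 * (a j + b j * t) * b j))) t := by
  have hS : HasDerivAt (fun s => ∑ j, (a j + b j * s) ^ 2)
      (∑ j : Fin d, 2 * (a j + b j * t) * b j) t := by
    apply HasDerivAt.fun_sum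
    intro j _
    have h1 : HasDerivAt (fun s => a j + b j * s) (b j) t := by
      simpa using ((hasDerivAt_id t).const_mul (b j)).const_add (a j)
    have := h1.fun_pow 2
    norm_num at this
    convert this using 1 <;> ring
  have hE : HasDerivAt (fun s => Real.exp (-c * ∑ j, (a j + b j * s) ^ 2))
      (Real.exp (-c * ∑ j, (a j + b j * t) ^ 2) * (-c * ∑ j, 2 * (a j + b j * t) * b j)) t :=
    (hS.const_mul (-c)).exp
  have hP : HasDerivAt (fun s => p + q * s) q t := by
    simpa using ((hasDerivAt_id t).const_mul q).const_add p
  exact hP.mul hE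

lemma mulVec_update {d : ℕ} (A : Matrix (Fin d) (Fin d) ℝ) (x : Fin d → ℝ) (i : Fin d)
    (t : ℝ) (j : Fin d) :
    A.mulVec (Function.update x i t) j = A.mulVec x j + A j i * (t - x i) := by
  simp only [Matrix.mulVec, dotProduct]
  have : ∀ k, A j k * Function.update x i t k
      = A j k * x k + (if k = i then A j i * (t - x i) else 0) := by
    intro k
    rcases eq_or_ne k i with h | h
    · subst h; simp [Function.update_self]; ring
    · simp [Function.update_of_ne h, h]
  rw [Finset.sum_congr rfl fun k _ => this k, Finset.sum_add_distrib]
  simp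

lemma sum_affine2 {d : ℕ} (x y z : ℝ) (f g h : Fin d → ℝ) :
    ∑ i, (h i + x + y * f i + z * g i)
      = (∑ i, h i) + d * x + y * ∑ i, f i + z * ∑ i, g i := by
  rw [Finset.sum_add_distrib, Finset.sum_add_distrib, Finset.sum_add_distrib,
    ← Finset.mul_sum, ← Finset.mul_sum, Finset.sum_const, Finset.card_univ,
    Fintype.card_fin, nsmul_eq_mul]

/-- If `tr A = 0` and the fluctuation–dissipation relation `γ = σ²β/2` holds, then
`ρ(Q,V) = exp(−(βM/2)|V − AQ|²)` is a stationary solution of the Fokker–Planck equation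
of the nonequilibrium Langevin dynamics `dQ = V dt`, `M dV = M A V dt − γ(V − AQ) dt + σ dW`:
`∑ᵢ ∂/∂Qᵢ (Vᵢ ρ) + ∑ᵢ ∂/∂Vᵢ ([(A V)ᵢ − (γ/M)(V − AQ)ᵢ] ρ) = (σ²/(2M²)) ∑ᵢ ∂²ρ/∂Vᵢ²`. -/
theorem stationary_fokker_planck_inertial_langevin
    (d : ℕ) (hd : 1 ≤ d)
    (A : Matrix (Fin d) (Fin d) ℝ) (hA : A.trace = 0)
    (M β γ σ : ℝ) (hM : 0 < M) (hβ : 0 < β) (hγ : 0 < γ) (hσ : 0 < σ)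
    (hfd : γ = σ ^ 2 * β / 2)
    (ρ : (Fin d → ℝ) → (Fin d → ℝ) → ℝ)
    (hρ : ∀ Q V : Fin d → ℝ,
      ρ Q V = Real.exp (-(β * M / 2) * ∑ i, (V i - A.mulVec Q i) ^ 2)) :
    ∀ Q V : Fin d → ℝ,
      (∑ i, partialDeriv' i (fun Q' => V i * ρ Q' V) Q) +
      (∑ i, partialDeriv' i
          (fun V' => (A.mulVec V' i - γ / M * (V' i - A.mulVec Q i)) * ρ Q V') V)
      = σ ^ 2 / (2 * M ^ 2) *
          ∑ i, partialDeriv' i (fun V' => partialDeriv' i (fun V'' => ρ Q V'') V') V := by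
  intro Q V
  -- Term 1: partial derivatives in Q
  have h1 : ∀ i : Fin d, partialDeriv' i (fun Q' => V i * ρ Q' V) Q
      = (β * M * ρ Q V) * (V i * ∑ j, (V j - A.mulVec Q j) * A j i) := by
    intro i
    have hfun : (fun t => V i * ρ (Function.update Q i t) V)
        = fun t => (V i + 0 * t) * Real.exp (-(β * M / 2) *
            ∑ j, ((V j - A.mulVec Q j + A j i * Q i) + (-(A j i)) * t) ^ 2) := by
      funext t
      rw [hρ]
      have hs : ∀ j : Fin d, (V j - A.mulVec (Function.update Q i t) j) ^ 2
          = ((V j - A.mulVec Q j + A j i * Q i) + (-(A j i)) * t) ^ 2 := by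
        intro j; rw [mulVec_update]; ring
      rw [Finset.sum_congr rfl fun j _ => hs j]
      ring
    have hder := (affine_exp_hasDerivAt (β * M / 2) (V i) 0
      (fun j => V j - A.mulVec Q j + A j i * Q i) (fun j => -(A j i)) (Q i)).deriv
    unfold partialDeriv'
    rw [hfun, hder]
    have e1 : ∀ j : Fin d,
        V j - A.mulVec Q j + A j i * Q i + -(A j i) * Q i = V j - A.mulVec Q j :=
      fun j => by ring
    simp only [e1]
    have e2 : ∑ j, 2 * (V j - A.mulVec Q j) * -(A j i)
        = (-2) * ∑ j, (V j - A.mulVec Q j) * A j i := by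
      rw [Finset.mul_sum]; exact Finset.sum_congr rfl fun j _ => by ring
    rw [e2, hρ]
    ring
  -- Term 2: partial derivatives in V
  have h2 : ∀ i : Fin d, partialDeriv' i
        (fun V' => (A.mulVec V' i - γ / M * (V' i - A.mulVec Q i)) * ρ Q V') V
      = (A i i - γ / M) * ρ Q V
        + (A.mulVec V i - γ / M * (V i - A.mulVec Q i)) *
            (ρ Q V * (-(β * M / 2) * (2 * (V i - A.mulVec Q i)))) := by
    intro i
    have hfun : (fun t => (A.mulVec (Function.update V i t) i
            - γ / M * (Function.update V i t i - A.mulVec Q i)) * ρ Q (Function.update V i t))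
        = fun t => ((A.mulVec V i - A i i * V i + γ / M * A.mulVec Q i) + (A i i - γ / M) * t) *
            Real.exp (-(β * M / 2) *
              ∑ j, ((V j - A.mulVec Q j - (if j = i then V i else 0))
                + (if j = i then (1:ℝ) else 0) * t) ^ 2) := by
      funext t
      rw [hρ]
      have hs : ∀ j : Fin d, (Function.update V i t j - A.mulVec Q j) ^ 2
          = ((V j - A.mulVec Q j - (if j = i then V i else 0))
              + (if j = i then (1:ℝ) else 0) * t) ^ 2 := by
        intro j
        rcases eq_or_ne j i with h | h
        · subst h; simp [Function.update_self]; ring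
        · simp [Function.update_of_ne h, h]
      rw [Finset.sum_congr rfl fun j _ => hs j, mulVec_update, Function.update_self]
      ring
    have hder := (affine_exp_hasDerivAt (β * M / 2)
      (A.mulVec V i - A i i * V i + γ / M * A.mulVec Q i) (A i i - γ / M)
      (fun j => V j - A.mulVec Q j - (if j = i then V i else 0))
      (fun j => if j = i then (1:ℝ) else 0) (V i)).deriv
    unfold partialDeriv'
    rw [hfun, hder]
    have e1 : ∀ j : Fin d,
        (V j - A.mulVec Q j - (if j = i then V i else 0))
          + (if j = i then (1:ℝ) else 0) * V i = V j - A.mulVec Q j :=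
      fun j => by split <;> ring
    simp only [e1]
    have e2 : ∑ j, 2 * (V j - A.mulVec Q j) * (if j = i then (1:ℝ) else 0)
        = 2 * (V i - A.mulVec Q i) := by
      simp [mul_ite]
    rw [e2, hρ]
    ring
  -- first V-derivative of ρ, at an arbitrary point
  have h3a : ∀ (i : Fin d) (W : Fin d → ℝ), partialDeriv' i (fun V'' => ρ Q V'') W
      = (β * M * A.mulVec Q i + (-(β * M)) * W i) *
          Real.exp (-(β * M / 2) * ∑ j, (W j - A.mulVec Q j) ^ 2) := by
    intro i W
    have hfun : (fun t => ρ Q (Function.update W i t))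
        = fun t => ((1:ℝ) + 0 * t) * Real.exp (-(β * M / 2) *
            ∑ j, ((W j - A.mulVec Q j - (if j = i then W i else 0))
              + (if j = i then (1:ℝ) else 0) * t) ^ 2) := by
      funext t
      rw [hρ]
      have hs : ∀ j : Fin d, (Function.update W i t j - A.mulVec Q j) ^ 2
          = ((W j - A.mulVec Q j - (if j = i then W i else 0))
              + (if j = i then (1:ℝ) else 0) * t) ^ 2 := by
        intro j
        rcases eq_or_ne j i with h | h
        · subst h; simp [Function.update_self]; ring
        · simp [Function.update_of_ne h, h]
      rw [Finset.sum_congr rfl fun j _ => hs j]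
      ring
    have hder := (affine_exp_hasDerivAt (β * M / 2) (1:ℝ) 0
      (fun j => W j - A.mulVec Q j - (if j = i then W i else 0))
      (fun j => if j = i then (1:ℝ) else 0) (W i)).deriv
    unfold partialDeriv'
    rw [hfun, hder]
    have e1 : ∀ j : Fin d,
        (W j - A.mulVec Q j - (if j = i then W i else 0))
          + (if j = i then (1:ℝ) else 0) * W i = W j - A.mulVec Q j :=
      fun j => by split <;> ring
    simp only [e1]
    have e2 : ∑ j, 2 * (W j - A.mulVec Q j) * (if j = i then (1:ℝ) else 0)
        = 2 * (W i - A.mulVec Q i) := by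
      simp [mul_ite]
    rw [e2]
    ring
  -- second V-derivative of ρ
  have h3 : ∀ i : Fin d, partialDeriv' i (fun V' => partialDeriv' i (fun V'' => ρ Q V'') V') V
      = -(β * M) * ρ Q V
        + (-(β * M) * (V i - A.mulVec Q i)) *
            (ρ Q V * (-(β * M / 2) * (2 * (V i - A.mulVec Q i)))) := by
    intro i
    have hfun : (fun t => partialDeriv' i (fun V'' => ρ Q V'') (Function.update V i t))
        = fun t => ((β * M * A.mulVec Q i) + (-(β * M)) * t) *
            Real.exp (-(β * M / 2) *
              ∑ j, ((V j - A.mulVec Q j - (if j = i then V i else 0))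
                + (if j = i then (1:ℝ) else 0) * t) ^ 2) := by
      funext t
      rw [h3a i (Function.update V i t)]
      have hs : ∀ j : Fin d, (Function.update V i t j - A.mulVec Q j) ^ 2
          = ((V j - A.mulVec Q j - (if j = i then V i else 0))
              + (if j = i then (1:ℝ) else 0) * t) ^ 2 := by
        intro j
        rcases eq_or_ne j i with h | h
        · subst h; simp [Function.update_self]; ring
        · simp [Function.update_of_ne h, h]
      rw [Finset.sum_congr rfl fun j _ => hs j, Function.update_self]
    have hder := (affine_exp_hasDerivAt (β * M / 2)
      (β * M * A.mulVec Q i) (-(β * M))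
      (fun j => V j - A.mulVec Q j - (if j = i then V i else 0))
      (fun j => if j = i then (1:ℝ) else 0) (V i)).deriv
    show deriv (fun t => partialDeriv' i (fun V'' => ρ Q V'') (Function.update V i t)) (V i) = _
    rw [hfun, hder]
    have e1 : ∀ j : Fin d,
        (V j - A.mulVec Q j - (if j = i then V i else 0))
          + (if j = i then (1:ℝ) else 0) * V i = V j - A.mulVec Q j :=
      fun j => by split <;> ring
    simp only [e1]
    have e2 : ∑ j, 2 * (V j - A.mulVec Q j) * (if j = i then (1:ℝ) else 0)
        = 2 * (V i - A.mulVec Q i) := by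
      simp [mul_ite]
    rw [e2, hρ]
    ring
  rw [Finset.sum_congr rfl fun i _ => h1 i, Finset.sum_congr rfl fun i _ => h2 i,
    Finset.sum_congr rfl fun i _ => h3 i]
  -- index-swap identity
  have hP : ∑ i, V i * ∑ j, (V j - A.mulVec Q j) * A j i
      = ∑ i, A.mulVec V i * (V i - A.mulVec Q i) := by
    rw [Finset.sum_congr rfl fun i (_ : i ∈ Finset.univ) =>
      (Finset.mul_sum Finset.univ (fun j => (V j - A.mulVec Q j) * A j i) (V i)),
      Finset.sum_comm]
    refine Finset.sum_congr rfl fun j _ => ?_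
    simp only [Matrix.mulVec, dotProduct]
    rw [Finset.sum_mul]
    exact Finset.sum_congr rfl fun i _ => by ring
  have htr : ∑ i, A i i = 0 := by simpa [Matrix.trace, Matrix.diag] using hA
  -- reshape each sum into closed form
  have hsum1 : ∑ i, (β * M * ρ Q V) * (V i * ∑ j, (V j - A.mulVec Q j) * A j i)
      = (β * M * ρ Q V) * ∑ i, A.mulVec V i * (V i - A.mulVec Q i) := by
    rw [← Finset.mul_sum, hP]
  have hsum2 : ∑ i, ((A i i - γ / M) * ρ Q V
        + (A.mulVec V i - γ / M * (V i - A.mulVec Q i)) *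
            (ρ Q V * (-(β * M / 2) * (2 * (V i - A.mulVec Q i)))))
      = 0 + (d : ℝ) * (-(γ / M) * ρ Q V)
        + (-(β * M) * ρ Q V) * ∑ i, A.mulVec V i * (V i - A.mulVec Q i)
        + ((γ / M) * (β * M) * ρ Q V) * ∑ i, (V i - A.mulVec Q i) ^ 2 := by
    rw [Finset.sum_congr rfl fun i (_ : i ∈ Finset.univ) =>
      show (A i i - γ / M) * ρ Q V
          + (A.mulVec V i - γ / M * (V i - A.mulVec Q i)) *
              (ρ Q V * (-(β * M / 2) * (2 * (V i - A.mulVec Q i))))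
        = (A i i * ρ Q V) + (-(γ / M) * ρ Q V)
          + (-(β * M) * ρ Q V) * (A.mulVec V i * (V i - A.mulVec Q i))
          + ((γ / M) * (β * M) * ρ Q V) * (V i - A.mulVec Q i) ^ 2 from by ring,
      sum_affine2, ← Finset.sum_mul, htr, zero_mul]
  have hsum3 : ∑ i, (-(β * M) * ρ Q V
        + (-(β * M) * (V i - A.mulVec Q i)) *
            (ρ Q V * (-(β * M / 2) * (2 * (V i - A.mulVec Q i)))))
      = 0 + (d : ℝ) * (-(β * M) * ρ Q V)
        + 0 * ∑ i, A.mulVec V i * (V i - A.mulVec Q i)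
        + ((β * M) * (β * M) * ρ Q V) * ∑ i, (V i - A.mulVec Q i) ^ 2 := by
    rw [Finset.sum_congr rfl fun i (_ : i ∈ Finset.univ) =>
      show -(β * M) * ρ Q V
          + (-(β * M) * (V i - A.mulVec Q i)) *
              (ρ Q V * (-(β * M / 2) * (2 * (V i - A.mulVec Q i))))
        = (0 : ℝ) + (-(β * M) * ρ Q V)
          + 0 * (A.mulVec V i * (V i - A.mulVec Q i))
          + ((β * M) * (β * M) * ρ Q V) * (V i - A.mulVec Q i) ^ 2 from by ring,
      sum_affine2]
    simp
  rw [hsum1, hsum2, hsum3]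
  have hM' : (M : ℝ) ≠ 0 := ne_of_gt hM
  subst hfd
  field_simp
  ring
end

section
/- Let A : ℝ^d → ℝ^d be linear with operator norm ‖A‖, let w ∈ ℝ^d, and let q : [0,∞) → ℝ^d be differentiable with q'(t) = A q(t) + w for all t ≥ 0. Then for all t ≥ 0, |q(t)|² ≥ (|q(0)|² + |w|²/(2‖A‖+1)) e^{−(2‖A‖+1) t} − |w|²/(2‖A‖+1); in particular |q(t)|² ≥ |q(0)|² e^{−(2‖A‖+1) t} − |w|². -/
/-- Lower bound on the distance to the origin of a bath atom trajectory
`q'(t) = A q(t) + w` with constant relative velocity `w`: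
`|q(t)|² ≥ (|q(0)|² + |w|²/(2‖A‖+1)) e^{−(2‖A‖+1)t} − |w|²/(2‖A‖+1)`, and in particular
`|q(t)|² ≥ |q(0)|² e^{−(2‖A‖+1)t} − |w|²`, for all `t ≥ 0`. -/
theorem bath_atom_position_lower_bound
    (d : ℕ)
    (A : EuclideanSpace ℝ (Fin d) →L[ℝ] EuclideanSpace ℝ (Fin d))
    (w : EuclideanSpace ℝ (Fin d))
    (q : ℝ → EuclideanSpace ℝ (Fin d))
    (hq : ∀ t : ℝ, 0 ≤ t → HasDerivAt q (A (q t) + w) t) :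
    ∀ t : ℝ, 0 ≤ t →
      (‖q 0‖ ^ 2 + ‖w‖ ^ 2 / (2 * ‖A‖ + 1)) * Real.exp (-(2 * ‖A‖ + 1) * t)
          - ‖w‖ ^ 2 / (2 * ‖A‖ + 1) ≤ ‖q t‖ ^ 2 ∧
      ‖q 0‖ ^ 2 * Real.exp (-(2 * ‖A‖ + 1) * t) - ‖w‖ ^ 2 ≤ ‖q t‖ ^ 2 := by
  set c : ℝ := 2 * ‖A‖ + 1 with hcdef
  have hA0 : (0:ℝ) ≤ ‖A‖ := norm_nonneg _
  have hc1 : (1:ℝ) ≤ c := by rw [hcdef]; linarith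
  have hc0 : (0:ℝ) < c := lt_of_lt_of_le one_pos hc1
  set K : ℝ := ‖w‖ ^ 2 / c with hKdef
  have hK0 : 0 ≤ K := by positivity
  have hKc : c * K = ‖w‖ ^ 2 := by rw [hKdef]; field_simp [hc0.ne']
  have hKw : K ≤ ‖w‖ ^ 2 := by
    rw [hKdef]
    calc ‖w‖ ^ 2 / c ≤ ‖w‖ ^ 2 / 1 := by
          apply div_le_div_of_nonneg_left (by positivity) one_pos hc1
      _ = ‖w‖ ^ 2 := by ring
  set g : ℝ → ℝ := fun t => ((inner ℝ (q t) (q t) : ℝ) + K) * Real.exp (c * t) with hgdef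
  -- derivative of g
  have hg : ∀ t : ℝ, 0 ≤ t → HasDerivAt g
      (((inner ℝ (q t) (A (q t) + w) : ℝ) + (inner ℝ (A (q t) + w) (q t) : ℝ)) * Real.exp (c * t)
        + ((inner ℝ (q t) (q t) : ℝ) + K) * (c * Real.exp (c * t))) t := by
    intro t ht
    have hinner : HasDerivAt (fun t => ((inner ℝ (q t) (q t) : ℝ) + K))
        ((inner ℝ (q t) (A (q t) + w) : ℝ) + (inner ℝ (A (q t) + w) (q t) : ℝ)) t :=
      ((hq t ht).inner ℝ (hq t ht)).add_const K
    have hexp : HasDerivAt (fun t => Real.exp (c * t)) (c * Real.exp (c * t)) t := by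
      simpa [mul_comm] using ((hasDerivAt_id t).const_mul c).exp
    exact hinner.mul hexp
  -- the derivative is nonneg
  have hderiv_nonneg : ∀ t : ℝ, 0 ≤ t →
      0 ≤ ((inner ℝ (q t) (A (q t) + w) : ℝ) + (inner ℝ (A (q t) + w) (q t) : ℝ)) * Real.exp (c * t)
        + ((inner ℝ (q t) (q t) : ℝ) + K) * (c * Real.exp (c * t)) := by
    intro t ht
    have hsymm : (inner ℝ (A (q t) + w) (q t) : ℝ) = (inner ℝ (q t) (A (q t) + w) : ℝ) :=
      real_inner_comm _ _
    have h1 : -(‖A‖ * ‖q t‖ ^ 2) ≤ (inner ℝ (q t) (A (q t)) : ℝ) := by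
      have := neg_abs_le ((inner ℝ (q t) (A (q t)) : ℝ))
      have h2 : |(inner ℝ (q t) (A (q t)) : ℝ)| ≤ ‖q t‖ * ‖A (q t)‖ := abs_real_inner_le_norm _ _
      have h3 : ‖A (q t)‖ ≤ ‖A‖ * ‖q t‖ := A.le_opNorm _
      nlinarith [norm_nonneg (q t)]
    have h4 : -(‖q t‖ * ‖w‖) ≤ (inner ℝ (q t) w : ℝ) := by
      have := neg_abs_le ((inner ℝ (q t) w : ℝ))
      have h2 : |(inner ℝ (q t) w : ℝ)| ≤ ‖q t‖ * ‖w‖ := abs_real_inner_le_norm _ _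
      linarith
    have h5 : 2 * (‖q t‖ * ‖w‖) ≤ ‖q t‖ ^ 2 + ‖w‖ ^ 2 := by
      nlinarith [sq_nonneg (‖q t‖ - ‖w‖)]
    have hexp_pos : 0 < Real.exp (c * t) := Real.exp_pos _
    have hsplit : (inner ℝ (q t) (A (q t) + w) : ℝ)
        = (inner ℝ (q t) (A (q t)) : ℝ) + (inner ℝ (q t) w : ℝ) := inner_add_right _ _ _
    have hqq : (inner ℝ (q t) (q t) : ℝ) = ‖q t‖ ^ 2 := real_inner_self_eq_norm_sq _
    have key : 0 ≤ 2 * (inner ℝ (q t) (A (q t) + w) : ℝ) + c * (‖q t‖ ^ 2 + K) := by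
      rw [hsplit]
      nlinarith
    rw [hsymm, hqq]
    nlinarith
  -- monotone
  have hmono : MonotoneOn g (Set.Ici (0:ℝ)) := by
    apply monotoneOn_of_deriv_nonneg (convex_Ici 0)
    · exact fun t ht => (hg t ht).continuousAt.continuousWithinAt
    · rw [interior_Ici]
      exact fun t ht => (hg t (le_of_lt ht)).differentiableAt.differentiableWithinAt
    · rw [interior_Ici]
      intro t ht
      rw [(hg t (le_of_lt ht)).deriv]
      exact hderiv_nonneg t (le_of_lt ht)
  intro t ht
  have hg0 : g 0 = ‖q 0‖ ^ 2 + K := by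
    simp only [hgdef, real_inner_self_eq_norm_sq, mul_zero, Real.exp_zero, mul_one]
  have hgt : g t = (‖q t‖ ^ 2 + K) * Real.exp (c * t) := by
    simp only [hgdef, real_inner_self_eq_norm_sq]
  have hle : ‖q 0‖ ^ 2 + K ≤ (‖q t‖ ^ 2 + K) * Real.exp (c * t) := by
    rw [← hg0, ← hgt]
    exact hmono (Set.self_mem_Ici) ht ht
  have hexp_pos : (0:ℝ) < Real.exp (c * t) := Real.exp_pos _
  have hexpneg : Real.exp (-c * t) = (Real.exp (c * t))⁻¹ := by
    rw [← Real.exp_neg]; ring_nf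
  have key1 : (‖q 0‖ ^ 2 + K) * Real.exp (-c * t) - K ≤ ‖q t‖ ^ 2 := by
    have hdiv : (‖q 0‖ ^ 2 + K) / Real.exp (c * t) ≤ ‖q t‖ ^ 2 + K :=
      (div_le_iff₀ hexp_pos).mpr hle
    rw [hexpneg, ← div_eq_mul_inv]
    linarith
  constructor
  · exact key1
  · have hexp1 : Real.exp (-c * t) ≤ 1 := by
      apply Real.exp_le_one_iff.mpr
      nlinarith
    have hexpnn : 0 ≤ Real.exp (-c * t) := le_of_lt (Real.exp_pos _)
    have : ‖q 0‖ ^ 2 * Real.exp (-c * t) - ‖w‖ ^ 2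
        ≤ (‖q 0‖ ^ 2 + K) * Real.exp (-c * t) - K := by nlinarith
    linarith [key1, this]
end

section
/- For any two points (Q,V) and (Q',V') in ℝ^d × ℝ^d satisfying |V| + ‖A‖(|Q| + R) ≤ c and |V'| + ‖A‖(|Q'| + R) ≤ c, the jump intensities coincide: Λ(Q,V) = Λ(Q',V'). In other words, when tr A = 0 the total jump rate of the Markov approximation is independent of the position and velocity of the large particle on this region. -/
open MeasureTheory
open scoped RealInnerProductSpace Pointwise

/-- Translation change of variables on `Ioi`. -/
lemma integral_Ioi_comp_add_right (g : ℝ → ℝ) (t a : ℝ) :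
    ∫ x in Set.Ioi t, g (x + a) = ∫ x in Set.Ioi (t + a), g x := by
  rw [← integral_indicator measurableSet_Ioi, ← integral_indicator measurableSet_Ioi,
    ← integral_add_right_eq_self (fun x => (Set.Ioi (t + a)).indicator g x) a]
  congr 1
  funext x
  by_cases h : t < x
  · simp [Set.indicator_apply, h, show t + a < x + a by linarith]
  · simp [Set.indicator_apply, h, show ¬ (t + a < x + a) by intro hh; exact h (by linarith)]

/-- The integral of a linear functional over the unit sphere (w.r.t. the measure
`volume.toSphere`) vanishes, by antipodal symmetry. -/
lemma integral_inner_toSphere_eq_zero (d : ℕ) (u : EuclideanSpace ℝ (Fin d)) :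
    ∫ n : Metric.sphere (0 : EuclideanSpace ℝ (Fin d)) 1,
      ⟪u, (n : EuclideanSpace ℝ (Fin d))⟫
        ∂((volume : Measure (EuclideanSpace ℝ (Fin d))).toSphere) = 0 := by
  have hmem : ∀ n : Metric.sphere (0 : (EuclideanSpace ℝ (Fin d))) 1,
      -(n : (EuclideanSpace ℝ (Fin d))) ∈ Metric.sphere (0 : (EuclideanSpace ℝ (Fin d))) 1 :=
    fun n => by simp
  let e : Metric.sphere (0 : (EuclideanSpace ℝ (Fin d))) 1 ≃ᵐ Metric.sphere (0 : (EuclideanSpace ℝ (Fin d))) 1 :=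
    { toFun := fun n => ⟨-(n : (EuclideanSpace ℝ (Fin d))), hmem n⟩
      invFun := fun n => ⟨-(n : (EuclideanSpace ℝ (Fin d))), hmem n⟩
      left_inv := fun n => by simp
      right_inv := fun n => by simp
      measurable_toFun :=
        (Continuous.subtype_mk (continuous_subtype_val.neg) hmem).measurable
      measurable_invFun :=
        (Continuous.subtype_mk (continuous_subtype_val.neg) hmem).measurable }
  have hcoe : ∀ n : Metric.sphere (0 : (EuclideanSpace ℝ (Fin d))) 1, ((e n : Metric.sphere (0 : (EuclideanSpace ℝ (Fin d))) 1) : (EuclideanSpace ℝ (Fin d))) = -(n : (EuclideanSpace ℝ (Fin d))) :=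
    fun n => rfl
  have hee : ∀ n : Metric.sphere (0 : (EuclideanSpace ℝ (Fin d))) 1, e (e n) = n := fun n => Subtype.ext (neg_neg _)
  have hneg : ∀ T : Set (EuclideanSpace ℝ (Fin d)), volume (-T) = volume T := by
    intro T
    rw [show -T = (-1 : ℝ) • T by simp, MeasureTheory.Measure.addHaar_smul]
    simp
  have hmp : MeasurePreserving e (volume : Measure (EuclideanSpace ℝ (Fin d))).toSphere (volume : Measure (EuclideanSpace ℝ (Fin d))).toSphere := by
    refine ⟨e.measurable, ?_⟩
    refine Measure.ext fun s hs => ?_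
    rw [e.map_apply]
    rw [Measure.toSphere_apply' _ (e.measurable hs), Measure.toSphere_apply' _ hs]
    have himg : (Subtype.val '' (e ⁻¹' s) : Set (EuclideanSpace ℝ (Fin d))) = -(Subtype.val '' s) := by
      ext x
      simp only [Set.mem_image, Set.mem_preimage, Set.mem_neg]
      constructor
      · rintro ⟨n, hn, rfl⟩
        exact ⟨e n, hn, hcoe n⟩
      · rintro ⟨n, hn, hx⟩
        refine ⟨e n, by rw [hee]; exact hn, ?_⟩
        rw [hcoe, hx, neg_neg]
    rw [himg, Set.smul_neg, hneg]
  have hint := hmp.integral_comp e.measurableEmbedding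
    (fun n : Metric.sphere (0 : (EuclideanSpace ℝ (Fin d))) 1 => ⟪u, (n : (EuclideanSpace ℝ (Fin d)))⟫)
  have h2 : ∫ n : Metric.sphere (0 : (EuclideanSpace ℝ (Fin d))) 1, ⟪u, ((e n : Metric.sphere (0 : (EuclideanSpace ℝ (Fin d))) 1) : (EuclideanSpace ℝ (Fin d)))⟫
      ∂(volume : Measure (EuclideanSpace ℝ (Fin d))).toSphere
      = ∫ n : Metric.sphere (0 : (EuclideanSpace ℝ (Fin d))) 1, -⟪u, (n : (EuclideanSpace ℝ (Fin d)))⟫ ∂(volume : Measure (EuclideanSpace ℝ (Fin d))).toSphere := by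
    refine integral_congr_ae (Filter.Eventually.of_forall fun n => ?_)
    dsimp only
    rw [hcoe, inner_neg_right]
  have h3 : -(∫ n : Metric.sphere (0 : (EuclideanSpace ℝ (Fin d))) 1, ⟪u, (n : (EuclideanSpace ℝ (Fin d)))⟫ ∂(volume : Measure (EuclideanSpace ℝ (Fin d))).toSphere)
      = ∫ n : Metric.sphere (0 : (EuclideanSpace ℝ (Fin d))) 1, ⟪u, (n : (EuclideanSpace ℝ (Fin d)))⟫ ∂(volume : Measure (EuclideanSpace ℝ (Fin d))).toSphere := by
    calc -(∫ n : Metric.sphere (0 : (EuclideanSpace ℝ (Fin d))) 1, ⟪u, (n : (EuclideanSpace ℝ (Fin d)))⟫ ∂(volume : Measure (EuclideanSpace ℝ (Fin d))).toSphere)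
        = ∫ n : Metric.sphere (0 : (EuclideanSpace ℝ (Fin d))) 1, -⟪u, (n : (EuclideanSpace ℝ (Fin d)))⟫ ∂(volume : Measure (EuclideanSpace ℝ (Fin d))).toSphere :=
          (integral_neg _).symm
      _ = ∫ n : Metric.sphere (0 : (EuclideanSpace ℝ (Fin d))) 1, ⟪u, ((e n : Metric.sphere (0 : (EuclideanSpace ℝ (Fin d))) 1) : (EuclideanSpace ℝ (Fin d)))⟫
            ∂(volume : Measure (EuclideanSpace ℝ (Fin d))).toSphere := h2.symm
      _ = ∫ n : Metric.sphere (0 : (EuclideanSpace ℝ (Fin d))) 1, ⟪u, (n : (EuclideanSpace ℝ (Fin d)))⟫ ∂(volume : Measure (EuclideanSpace ℝ (Fin d))).toSphere := hint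
  linarith

/-- Evaluation of the inner (velocity) integral by an affine change of variables. -/
lemma inner_velocity_integral_eval (C k l c a : ℝ) (hk : 0 < k) (hkl : k * l = 1)
    (hac : a ≤ c) (G : ℝ → ℝ) (hG : Integrable G) (hG1 : Integrable (fun w => w * G w)) :
    ∫ x in Set.Ici (l * max (c - a) 0), C * x * G (k * x + a)
      = (l ^ 2 * C * ∫ w in Set.Ioi c, w * G w)
        - (l ^ 2 * C * ∫ w in Set.Ioi c, G w) * a := by
  have hl : l = k⁻¹ := eq_inv_of_mul_eq_one_left (by linarith [mul_comm k l])
  subst hl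
  have hmax : max (c - a) 0 = c - a := max_eq_left (by linarith)
  rw [hmax, MeasureTheory.integral_Ici_eq_integral_Ioi]
  have step1 : ∫ x in Set.Ioi (k⁻¹ * (c - a)), C * x * G (k * x + a)
      = ∫ x in Set.Ioi (k⁻¹ * (c - a)),
          (fun u => C * (k⁻¹ * u) * G (u + a)) (k * x) := by
    refine setIntegral_congr_fun measurableSet_Ioi fun x _ => ?_
    simp only
    rw [inv_mul_cancel_left₀ hk.ne']
  rw [step1, integral_comp_mul_left_Ioi (fun u => C * (k⁻¹ * u) * G (u + a)) _ hk,
    mul_inv_cancel_left₀ hk.ne', smul_eq_mul]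
  have step2 : ∫ u in Set.Ioi (c - a), C * (k⁻¹ * u) * G (u + a)
      = ∫ u in Set.Ioi (c - a), (fun w => C * (k⁻¹ * (w - a)) * G w) (u + a) := by
    refine setIntegral_congr_fun measurableSet_Ioi fun u _ => ?_
    simp only [add_sub_cancel_right]
  have step4 : ∫ u in Set.Ioi (c - a), C * (k⁻¹ * u) * G (u + a)
      = ∫ w in Set.Ioi c, C * (k⁻¹ * (w - a)) * G w := by
    rw [step2, integral_Ioi_comp_add_right (fun w => C * (k⁻¹ * (w - a)) * G w) _ a,
      sub_add_cancel]
  have goal_eq : k⁻¹ * ∫ u in Set.Ioi (c - a), C * (k⁻¹ * u) * G (u + a)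
      = (k⁻¹ ^ 2 * C * ∫ w in Set.Ioi c, w * G w)
        - (k⁻¹ ^ 2 * C * ∫ w in Set.Ioi c, G w) * a := by
    rw [step4]
    have step3 : ∫ w in Set.Ioi c, C * (k⁻¹ * (w - a)) * G w
        = ∫ w in Set.Ioi c,
            ((C * k⁻¹) * (w * G w) - (C * k⁻¹ * a) * G w) := by
      refine setIntegral_congr_fun measurableSet_Ioi fun w _ => ?_
      ring
    rw [step3, integral_sub ((hG1.integrableOn).const_mul _) ((hG.integrableOn).const_mul _),
      MeasureTheory.integral_const_mul, MeasureTheory.integral_const_mul]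
    ring
  exact goal_eq

/-- When `tr A = 0`, the total jump intensity `Λ` of the Markov approximation is
independent of the position and velocity of the large particle on the region
`|V| + ‖A‖(|Q| + R) ≤ c`. -/
theorem jump_intensity_independent_of_state
    (d : ℕ) (hd : 1 ≤ d)
    (A : EuclideanSpace ℝ (Fin d) →L[ℝ] EuclideanSpace ℝ (Fin d))
    (hA : LinearMap.trace ℝ (EuclideanSpace ℝ (Fin d))
      (A : EuclideanSpace ℝ (Fin d) →ₗ[ℝ] EuclideanSpace ℝ (Fin d)) = 0)
    (m M lam R c : ℝ)
    (hm : 0 < m) (hM : 0 < M) (hlam : 0 < lam) (hR : 0 < R) (hc : 0 < c)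
    (f1 : ℝ → ℝ) (hf1_nonneg : ∀ x, 0 ≤ f1 x)
    (hf1_int : Integrable (fun x => (1 + |x|) * f1 x))
    (Λ : EuclideanSpace ℝ (Fin d) → EuclideanSpace ℝ (Fin d) → ℝ)
    (hΛ : ∀ Q V : EuclideanSpace ℝ (Fin d),
      Λ Q V =
        ∫ n, (∫ Vh in Set.Ici ((2 * m / (M + m)) *
            max (c - ⟪V - A (Q - R • (n : EuclideanSpace ℝ (Fin d))),
                      (n : EuclideanSpace ℝ (Fin d))⟫) 0),
          (m ^ (-(1 : ℝ) / 2) * lam) * R ^ (d - 1) * ((M + m) / (2 * m)) ^ 2 * Vh *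
            (m ^ ((1 : ℝ) / 2) *
              f1 (m ^ ((1 : ℝ) / 2) * ((M + m) / (2 * m) * Vh +
                ⟪V - A (Q - R • (n : EuclideanSpace ℝ (Fin d))),
                  (n : EuclideanSpace ℝ (Fin d))⟫))))
          ∂((volume : Measure (EuclideanSpace ℝ (Fin d))).toSphere)) :
    ∀ Q V Q' V' : EuclideanSpace ℝ (Fin d),
      ‖V‖ + ‖A‖ * (‖Q‖ + R) ≤ c → ‖V'‖ + ‖A‖ * (‖Q'‖ + R) ≤ c →
      Λ Q V = Λ Q' V' := by
  intro Q V Q' V' hQV hQV'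
  have hMm : (0 : ℝ) < M + m := by linarith
  have hk : (0 : ℝ) < (M + m) / (2 * m) := by positivity
  have hkl : (M + m) / (2 * m) * (2 * m / (M + m)) = 1 := by
    field_simp
  have hs : (0 : ℝ) < m ^ ((1 : ℝ) / 2) := Real.rpow_pos_of_pos hm _
  have hf1m : AEStronglyMeasurable f1 (volume : Measure ℝ) := by
    have h1 : AEStronglyMeasurable (fun x => (1 + |x|) * f1 x) volume :=
      hf1_int.aestronglyMeasurable
    have h2 : Continuous fun x : ℝ => (1 + |x|)⁻¹ :=
      (continuous_const.add continuous_abs).inv₀ (fun x => (by positivity : (0:ℝ) < 1 + |x|).ne')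
    have h3 : AEStronglyMeasurable (fun x => (1 + |x|)⁻¹ * ((1 + |x|) * f1 x)) volume :=
      h2.aestronglyMeasurable.mul h1
    refine h3.congr (Filter.Eventually.of_forall fun x => ?_)
    have hne : (1 : ℝ) + |x| ≠ 0 := by positivity
    field_simp
  have hf1i : Integrable f1 := by
    refine hf1_int.mono' hf1m (Filter.Eventually.of_forall fun x => ?_)
    have h1 := abs_nonneg x
    have h2 := hf1_nonneg x
    have h3 := mul_nonneg h1 h2
    rw [Real.norm_eq_abs, abs_of_nonneg h2]
    nlinarith
  have hxf1i : Integrable (fun x => x * f1 x) := by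
    refine hf1_int.mono' (aestronglyMeasurable_id.mul hf1m)
      (Filter.Eventually.of_forall fun x => ?_)
    have h2 := hf1_nonneg x
    rw [Real.norm_eq_abs, abs_mul, abs_of_nonneg h2]
    nlinarith [abs_nonneg x]
  set G : ℝ → ℝ := fun w => m ^ ((1 : ℝ) / 2) * f1 (m ^ ((1 : ℝ) / 2) * w) with hGdef
  have hG : Integrable G := (hf1i.comp_mul_left' hs.ne').const_mul _
  have hG1 : Integrable (fun w => w * G w) := by
    have h2 : Integrable (fun w => (m ^ ((1 : ℝ) / 2) * w) * f1 (m ^ ((1 : ℝ) / 2) * w)) :=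
      hxf1i.comp_mul_left' hs.ne'
    exact h2.congr (Filter.Eventually.of_forall fun w => by simp only [hGdef]; ring)
  set C : ℝ := (m ^ (-(1 : ℝ) / 2) * lam) * R ^ (d - 1) * ((M + m) / (2 * m)) ^ 2 with hCdef
  set K1 : ℝ := (2 * m / (M + m)) ^ 2 * C * ∫ w in Set.Ioi c, w * G w with hK1def
  set K2 : ℝ := (2 * m / (M + m)) ^ 2 * C * ∫ w in Set.Ioi c, G w with hK2def
  have habs : ∀ (Q V : (EuclideanSpace ℝ (Fin d))), ‖V‖ + ‖A‖ * (‖Q‖ + R) ≤ c →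
      ∀ n : Metric.sphere (0 : (EuclideanSpace ℝ (Fin d))) 1,
        |⟪V - A (Q - R • (n : (EuclideanSpace ℝ (Fin d)))), (n : (EuclideanSpace ℝ (Fin d)))⟫| ≤ c := by
    intro Q V hb n
    have hn : ‖(n : (EuclideanSpace ℝ (Fin d)))‖ = 1 := norm_eq_of_mem_sphere n
    have h1 : |⟪V - A (Q - R • (n : (EuclideanSpace ℝ (Fin d)))), (n : (EuclideanSpace ℝ (Fin d)))⟫|
        ≤ ‖V - A (Q - R • (n : (EuclideanSpace ℝ (Fin d))))‖ * ‖(n : (EuclideanSpace ℝ (Fin d)))‖ := abs_real_inner_le_norm _ _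
    rw [hn, mul_one] at h1
    have h2 : ‖V - A (Q - R • (n : (EuclideanSpace ℝ (Fin d))))‖ ≤ ‖V‖ + ‖A (Q - R • (n : (EuclideanSpace ℝ (Fin d))))‖ := norm_sub_le _ _
    have h3 : ‖A (Q - R • (n : (EuclideanSpace ℝ (Fin d))))‖ ≤ ‖A‖ * ‖Q - R • (n : (EuclideanSpace ℝ (Fin d)))‖ := A.le_opNorm _
    have h4 : ‖Q - R • (n : (EuclideanSpace ℝ (Fin d)))‖ ≤ ‖Q‖ + R := by
      refine (norm_sub_le _ _).trans ?_
      rw [norm_smul, hn, Real.norm_eq_abs, abs_of_pos hR, mul_one]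
    have h5 : ‖A‖ * ‖Q - R • (n : (EuclideanSpace ℝ (Fin d)))‖ ≤ ‖A‖ * (‖Q‖ + R) :=
      mul_le_mul_of_nonneg_left h4 (norm_nonneg A)
    linarith
  have main : ∀ (Q V : (EuclideanSpace ℝ (Fin d))), ‖V‖ + ‖A‖ * (‖Q‖ + R) ≤ c →
      Λ Q V = ∫ n : Metric.sphere (0 : (EuclideanSpace ℝ (Fin d))) 1,
        (K1 - K2 * ⟪V - A (Q - R • (n : (EuclideanSpace ℝ (Fin d)))), (n : (EuclideanSpace ℝ (Fin d)))⟫)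
          ∂((volume : Measure (EuclideanSpace ℝ (Fin d))).toSphere) := by
    intro Q V hb
    rw [hΛ Q V]
    refine integral_congr_ae (Filter.Eventually.of_forall fun n => ?_)
    have hac : ⟪V - A (Q - R • (n : (EuclideanSpace ℝ (Fin d)))), (n : (EuclideanSpace ℝ (Fin d)))⟫ ≤ c :=
      (abs_le.mp (habs Q V hb n)).2
    exact inner_velocity_integral_eval C ((M + m) / (2 * m)) (2 * m / (M + m)) c
      (⟪V - A (Q - R • (n : (EuclideanSpace ℝ (Fin d)))), (n : (EuclideanSpace ℝ (Fin d)))⟫) hk hkl hac G hG hG1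
  rw [main Q V hQV, main Q' V' hQV']
  have hcont : ∀ (Q V : (EuclideanSpace ℝ (Fin d))), Continuous fun n : Metric.sphere (0 : (EuclideanSpace ℝ (Fin d))) 1 =>
      ⟪V - A (Q - R • (n : (EuclideanSpace ℝ (Fin d)))), (n : (EuclideanSpace ℝ (Fin d)))⟫ := by
    intro Q V
    exact (continuous_const.sub (A.continuous.comp
      (continuous_const.sub (continuous_subtype_val.const_smul R)))).inner
      continuous_subtype_val
  have hIF : ∀ (Q V : (EuclideanSpace ℝ (Fin d))), Integrable
      (fun n : Metric.sphere (0 : (EuclideanSpace ℝ (Fin d))) 1 => K1 - K2 * ⟪V - A (Q - R • (n : (EuclideanSpace ℝ (Fin d)))), (n : (EuclideanSpace ℝ (Fin d)))⟫)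
      ((volume : Measure (EuclideanSpace ℝ (Fin d))).toSphere) := by
    intro Q V
    refine (integrable_const K1).sub ?_
    refine Integrable.const_mul ?_ K2
    exact ((hcont Q V).integrable_of_hasCompactSupport
      (HasCompactSupport.of_compactSpace _))
  have hzero : ∫ n : Metric.sphere (0 : (EuclideanSpace ℝ (Fin d))) 1,
      ((K1 - K2 * ⟪V - A (Q - R • (n : (EuclideanSpace ℝ (Fin d)))), (n : (EuclideanSpace ℝ (Fin d)))⟫)
        - (K1 - K2 * ⟪V' - A (Q' - R • (n : (EuclideanSpace ℝ (Fin d)))), (n : (EuclideanSpace ℝ (Fin d)))⟫))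
        ∂((volume : Measure (EuclideanSpace ℝ (Fin d))).toSphere) = 0 := by
    have hpt : ∀ n : Metric.sphere (0 : (EuclideanSpace ℝ (Fin d))) 1,
        ((K1 - K2 * ⟪V - A (Q - R • (n : (EuclideanSpace ℝ (Fin d)))), (n : (EuclideanSpace ℝ (Fin d)))⟫)
          - (K1 - K2 * ⟪V' - A (Q' - R • (n : (EuclideanSpace ℝ (Fin d)))), (n : (EuclideanSpace ℝ (Fin d)))⟫))
        = K2 * ⟪(V' - A Q') - (V - A Q), (n : (EuclideanSpace ℝ (Fin d)))⟫ := by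
      intro n
      have hvec : (V' - A (Q' - R • (n : (EuclideanSpace ℝ (Fin d))))) - (V - A (Q - R • (n : (EuclideanSpace ℝ (Fin d)))))
          = (V' - A Q') - (V - A Q) := by
        rw [map_sub, map_sub]
        abel
      have hinner : ⟪V' - A (Q' - R • (n : (EuclideanSpace ℝ (Fin d)))), (n : (EuclideanSpace ℝ (Fin d)))⟫
          - ⟪V - A (Q - R • (n : (EuclideanSpace ℝ (Fin d)))), (n : (EuclideanSpace ℝ (Fin d)))⟫
          = ⟪(V' - A Q') - (V - A Q), (n : (EuclideanSpace ℝ (Fin d)))⟫ := by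
        rw [← inner_sub_left, hvec]
      rw [← hinner]; ring
    rw [integral_congr_ae (Filter.Eventually.of_forall hpt),
      MeasureTheory.integral_const_mul, integral_inner_toSphere_eq_zero d _, mul_zero]
  have hsub := integral_sub (hIF Q V) (hIF Q' V')
  rw [hzero] at hsub
  exact sub_eq_zero.mp hsub.symm
end

section
/- lim_{m→0⁺} C_m I₂(m) = (4 λ R^{d−1} S_{d−1} Φ₃/(M² d)) Id, where Id is the d×d identity matrix. This identifies the isotropic diffusion coefficient D = σ²/M² with σ² = (4 λ R^{d−1} S_{d−1}/d) Φ₃ of the limiting nonequilibrium Langevin dynamics M dV = −γ(V − AQ) dt + σ dW. -/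
open MeasureTheory
open scoped RealInnerProductSpace

section Helpers
open Set Filter Metric
open scoped Topology Pointwise

private lemma integral_comp_add_right_Ioi' (g : ℝ → ℝ) (a c : ℝ) :
    ∫ x in Ioi a, g (x + c) = ∫ x in Ioi (a + c), g x := by
  have A : MeasurableEmbedding fun x : ℝ => x + c :=
    (Homeomorph.addRight c).measurableEmbedding
  have h := A.setIntegral_map (μ := volume) g (Ioi (a + c))
  rw [map_add_right_eq_self volume c] at h
  rw [h, preimage_add_const_Ioi, add_sub_cancel_right]

private lemma tail_continuous {g : ℝ → ℝ} (hg : Integrable g) :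
    Continuous fun t => ∫ x in Ici t, g x := by
  have h1 : ∀ t : ℝ, ∫ x in Ici t, g x = (∫ x, g x) - ∫ x in Iic t, g x := by
    intro t
    have := integral_add_compl (measurableSet_Iic (a := t)) hg
    rw [compl_Iic] at this
    rw [integral_Ici_eq_integral_Ioi, ← this]
    ring
  have h2 : ∀ t : ℝ, ∫ x in Iic t, g x = (∫ x in Iic 0, g x) + ∫ x in (0:ℝ)..t, g x := by
    intro t
    rw [← intervalIntegral.integral_Iic_sub_Iic hg.integrableOn hg.integrableOn]
    ring
  have : (fun t => ∫ x in Ici t, g x)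
      = fun t => (∫ x, g x) - ((∫ x in Iic 0, g x) + ∫ x in (0:ℝ)..t, g x) := by
    funext t; rw [h1 t, h2 t]
  rw [this]
  exact continuous_const.sub (continuous_const.add (hg.continuous_primitive 0))

private lemma tail_abs_bound {g h : ℝ → ℝ} (hgh : ∀ x, |g x| ≤ h x)
    (hh : Integrable h) (hg : Integrable g) (t : ℝ) :
    |∫ x in Ici t, g x| ≤ ∫ x, h x := by
  have h0 : |∫ x in Ici t, g x| ≤ ∫ x in Ici t, |g x| := by
    simpa [Real.norm_eq_abs] using
      norm_integral_le_integral_norm (μ := volume.restrict (Ici t)) g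
  have h1 : ∫ x in Ici t, |g x| ≤ ∫ x in Ici t, h x :=
    setIntegral_mono_on hg.abs.integrableOn hh.integrableOn measurableSet_Ici
      (fun x _ => hgh x)
  have h2 : ∫ x in Ici t, h x ≤ ∫ x, h x :=
    setIntegral_le_integral hh
      (Eventually.of_forall fun x => (abs_nonneg (g x)).trans (hgh x))
  linarith

private lemma inner_transform (M m : ℝ) (hM : 0 < M) (hm : 0 < m) (α : ℝ) (f1 : ℝ → ℝ) :
    ∫ Vh in Ici ((2*m/(M+m)) * max (m ^ (-(1:ℝ)/5) - α) 0),
      m ^ (-(2:ℝ)) * Vh^3 * f1 ((M+m)/(2*m^((1:ℝ)/2)) * Vh + m^((1:ℝ)/2) * α)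
    = (16/(M+m)^4) * ∫ w in Ici (m^((1:ℝ)/2) * max (m ^ (-(1:ℝ)/5)) α),
        (w - m^((1:ℝ)/2)*α)^3 * f1 w := by
  have hMm : 0 < M + m := by linarith
  have hsq : m ^ ((1:ℝ)/2) * m ^ ((1:ℝ)/2) = m := by
    rw [← Real.rpow_add hm]; norm_num
  have hsqpos : 0 < m ^ ((1:ℝ)/2) := Real.rpow_pos_of_pos hm _
  set r : ℝ := m ^ ((1:ℝ)/2) with hr
  set c : ℝ := m ^ (-(1:ℝ)/5) with hc
  set β : ℝ := (M+m)/(2*r) with hβ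
  have hβpos : 0 < β := by positivity
  set s : ℝ := r * α with hs
  set L : ℝ := (2*m/(M+m)) * max (c - α) 0 with hL
  set F : ℝ → ℝ := fun w => m ^ (-(2:ℝ)) * ((w - s)/β)^3 * f1 w with hF
  have h1 : ∀ Vh : ℝ, m ^ (-(2:ℝ)) * Vh^3 * f1 (β * Vh + s) = F (β * Vh + s) := by
    intro Vh
    simp only [hF, add_sub_cancel_right]
    rw [mul_div_cancel_left₀ _ hβpos.ne']
  have hβL : β * L + s = r * max c α := by
    have h5 : β * L = r * max (c - α) 0 := by
      rw [hβ, hL, ← hsq]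
      have hMm' : (0:ℝ) < M + r * r := by rw [hsq]; exact hMm
      field_simp
    rw [h5, hs, ← mul_add, ← max_add_add_right, sub_add_cancel, zero_add]
  calc ∫ Vh in Ici L, m ^ (-(2:ℝ)) * Vh^3 * f1 (β * Vh + s)
      = ∫ Vh in Ioi L, F (β * Vh + s) := by
        rw [integral_Ici_eq_integral_Ioi]
        exact setIntegral_congr_fun measurableSet_Ioi fun x _ => h1 x
    _ = β⁻¹ • ∫ u in Ioi (β * L), F (u + s) := by
        exact integral_comp_mul_left_Ioi (fun u => F (u + s)) L hβpos
    _ = β⁻¹ • ∫ w in Ioi (β * L + s), F w := by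
        rw [integral_comp_add_right_Ioi']
    _ = (16/(M+m)^4) * ∫ w in Ici (r * max c α), (w - s)^3 * f1 w := by
        rw [hβL, integral_Ici_eq_integral_Ioi, smul_eq_mul]
        have : ∀ w : ℝ, F w = (m ^ (-(2:ℝ)) / β^3) * ((w - s)^3 * f1 w) := by
          intro w; rw [hF]; simp only [div_pow]; ring
        rw [setIntegral_congr_fun measurableSet_Ioi fun w _ => this w,
          integral_const_mul, ← mul_assoc]
        congr 1
        have hm2 : m ^ (-(2:ℝ)) = (m^2)⁻¹ := by
          rw [← Real.rpow_natCast m 2, ← Real.rpow_neg hm.le]; norm_num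
        have hMm' : (0:ℝ) < M + r * r := by rw [hsq]; exact hMm
        rw [hm2, hβ, ← hsq]
        field_simp
        ring

private lemma tail_cube_expand {f1 : ℝ → ℝ}
    (h0 : Integrable (fun x => x ^ (0:ℕ) * f1 x))
    (h1 : Integrable (fun x => x ^ (1:ℕ) * f1 x))
    (h2 : Integrable (fun x => x ^ (2:ℕ) * f1 x))
    (h3 : Integrable (fun x => x ^ (3:ℕ) * f1 x))
    (t s : ℝ) :
    ∫ w in Ici t, (w - s)^3 * f1 w
      = (∫ x in Ici t, x ^ (3:ℕ) * f1 x) - 3*s*(∫ x in Ici t, x ^ (2:ℕ) * f1 x)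
        + 3*s^2*(∫ x in Ici t, x ^ (1:ℕ) * f1 x) - s^3*(∫ x in Ici t, x ^ (0:ℕ) * f1 x) := by
  have i0 := h0.integrableOn (s := Ici t)
  have i1 := h1.integrableOn (s := Ici t)
  have i2 := h2.integrableOn (s := Ici t)
  have i3 := h3.integrableOn (s := Ici t)
  have key : (fun w => (w - s)^3 * f1 w)
      = fun w => w ^ (3:ℕ) * f1 w - 3*s*(w ^ (2:ℕ) * f1 w)
          + 3*s^2*(w ^ (1:ℕ) * f1 w) - s^3*(w ^ (0:ℕ) * f1 w) := by
    funext w; ring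
  have iA : Integrable (fun w => w ^ (3:ℕ) * f1 w - 3*s*(w ^ (2:ℕ) * f1 w))
      (volume.restrict (Ici t)) := i3.sub (i2.const_mul _)
  have iB : Integrable
      (fun w => w ^ (3:ℕ) * f1 w - 3*s*(w ^ (2:ℕ) * f1 w) + 3*s^2*(w ^ (1:ℕ) * f1 w))
      (volume.restrict (Ici t)) := iA.add (i1.const_mul _)
  calc ∫ w in Ici t, (w - s)^3 * f1 w
      = ∫ w in Ici t, (w ^ (3:ℕ) * f1 w - 3*s*(w ^ (2:ℕ) * f1 w)
          + 3*s^2*(w ^ (1:ℕ) * f1 w) - s^3*(w ^ (0:ℕ) * f1 w)) := by rw [key]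
    _ = (∫ w in Ici t, (w ^ (3:ℕ) * f1 w - 3*s*(w ^ (2:ℕ) * f1 w)
          + 3*s^2*(w ^ (1:ℕ) * f1 w))) - ∫ w in Ici t, s^3*(w ^ (0:ℕ) * f1 w) :=
        integral_sub iB (i0.const_mul _)
    _ = ((∫ w in Ici t, (w ^ (3:ℕ) * f1 w - 3*s*(w ^ (2:ℕ) * f1 w)))
          + ∫ w in Ici t, 3*s^2*(w ^ (1:ℕ) * f1 w)) - ∫ w in Ici t, s^3*(w ^ (0:ℕ) * f1 w) := by
        rw [integral_add iA (i1.const_mul _)]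
    _ = (((∫ w in Ici t, w ^ (3:ℕ) * f1 w) - ∫ w in Ici t, 3*s*(w ^ (2:ℕ) * f1 w))
          + ∫ w in Ici t, 3*s^2*(w ^ (1:ℕ) * f1 w)) - ∫ w in Ici t, s^3*(w ^ (0:ℕ) * f1 w) := by
        rw [integral_sub i3 (i2.const_mul _)]
    _ = _ := by rw [integral_const_mul, integral_const_mul, integral_const_mul]

private lemma even_moment_eq {f1 : ℝ → ℝ} (hf1_even : ∀ x, f1 (-x) = f1 x) (k : ℕ) :
    ∫ x, |x| ^ k * f1 x = 2 * ∫ x in Ioi (0:ℝ), x ^ k * f1 x := by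
  have h : ∀ x : ℝ, |x| ^ k * f1 x = (fun t => t ^ k * f1 t) |x| := by
    intro x
    rcases le_or_gt 0 x with hx | hx
    · simp [abs_of_nonneg hx]
    · rw [abs_of_neg hx]
      show (-x) ^ k * f1 x = (-x) ^ k * f1 (-x)
      rw [hf1_even x]
  calc ∫ x, |x| ^ k * f1 x = ∫ x, (fun t => t ^ k * f1 t) |x| := by
        exact integral_congr_ae (Filter.Eventually.of_forall h)
    _ = 2 * ∫ x in Ioi (0:ℝ), x ^ k * f1 x := integral_comp_abs (f := fun t => t ^ k * f1 t)

noncomputable section SphereSym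

variable {E : Type*} [NormedAddCommGroup E] [InnerProductSpace ℝ E]
  [FiniteDimensional ℝ E] [MeasurableSpace E] [BorelSpace E]

/-- A linear isometry equivalence restricted to the unit sphere, as a homeomorphism. -/
private def sphereHomeo (e : E ≃ₗᵢ[ℝ] E) : sphere (0:E) 1 ≃ₜ sphere (0:E) 1 where
  toFun n := ⟨e n, mem_sphere_zero_iff_norm.mpr
    (by rw [e.norm_map]; exact mem_sphere_zero_iff_norm.mp n.2)⟩
  invFun n := ⟨e.symm n, mem_sphere_zero_iff_norm.mpr
    (by rw [e.symm.norm_map]; exact mem_sphere_zero_iff_norm.mp n.2)⟩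
  left_inv n := Subtype.ext (e.symm_apply_apply n)
  right_inv n := Subtype.ext (e.apply_symm_apply n)
  continuous_toFun := Continuous.subtype_mk (e.continuous.comp continuous_subtype_val) _
  continuous_invFun := Continuous.subtype_mk (e.symm.continuous.comp continuous_subtype_val) _

private lemma measurePreserving_sphereHomeo (e : E ≃ₗᵢ[ℝ] E) :
    MeasurePreserving (sphereHomeo e)
      (volume : Measure E).toSphere (volume : Measure E).toSphere := by
  refine ⟨(sphereHomeo e).continuous.measurable, ?_⟩
  refine Measure.ext fun s hs => ?_
  rw [Measure.map_apply (sphereHomeo e).continuous.measurable hs,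
    Measure.toSphere_apply' _ ((sphereHomeo e).continuous.measurable hs),
    Measure.toSphere_apply' _ hs]
  congr 1
  have h1 : ((↑) '' ((sphereHomeo e) ⁻¹' s) : Set E) = e ⁻¹' ((↑) '' s) := by
    ext x
    constructor
    · rintro ⟨n, hn, rfl⟩
      exact ⟨sphereHomeo e n, hn, rfl⟩
    · intro hx
      obtain ⟨n0, hn0, hEq⟩ := hx
      have hx1 : x ∈ sphere (0:E) 1 := mem_sphere_zero_iff_norm.mpr (by
        rw [← e.norm_map x, ← hEq]; exact mem_sphere_zero_iff_norm.mp n0.2)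
      refine ⟨⟨x, hx1⟩, ?_, rfl⟩
      show sphereHomeo e ⟨x, hx1⟩ ∈ s
      have : sphereHomeo e ⟨x, hx1⟩ = n0 := Subtype.ext hEq.symm
      rw [this]; exact hn0
  rw [h1]
  have h2 : Ioo (0:ℝ) 1 • (e ⁻¹' ((↑) '' s)) = e ⁻¹' (Ioo (0:ℝ) 1 • ((↑) '' s)) := by
    ext x
    simp only [Set.mem_smul, Set.mem_preimage]
    constructor
    · rintro ⟨r, hr, y, hy, rfl⟩
      exact ⟨r, hr, e y, hy, (e.map_smul r y).symm⟩
    · rintro ⟨r, hr, z, hz, hez⟩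
      refine ⟨r, hr, e.symm z, by simp [hz], ?_⟩
      have : e (r • e.symm z) = r • z := by rw [e.map_smul, e.apply_symm_apply]
      apply e.injective
      rw [this, hez]
  rw [h2]
  exact e.measurePreserving.measure_preimage_emb e.toHomeomorph.measurableEmbedding _

private lemma sphere_integral_comp_isometry (e : E ≃ₗᵢ[ℝ] E) (f : E → ℝ) :
    ∫ n : sphere (0:E) 1, f (e n) ∂(volume : Measure E).toSphere
      = ∫ n : sphere (0:E) 1, f n ∂(volume : Measure E).toSphere :=
  (measurePreserving_sphereHomeo e).integral_comp
    (sphereHomeo e).measurableEmbedding (fun n => f n)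

end SphereSym

section Euclid
variable {d : ℕ}

private lemma sum_sq_coord (n : sphere (0 : EuclideanSpace ℝ (Fin d)) 1) :
    ∑ k, (n : EuclideanSpace ℝ (Fin d)) k * (n : EuclideanSpace ℝ (Fin d)) k = 1 := by
  have h1 : ‖(n : EuclideanSpace ℝ (Fin d))‖ = 1 := mem_sphere_zero_iff_norm.mp n.2
  rw [EuclideanSpace.norm_eq] at h1
  have h2 : ∑ k, ‖(n : EuclideanSpace ℝ (Fin d)) k‖ ^ 2 = 1 := by
    have hnn : 0 ≤ ∑ k, ‖(n : EuclideanSpace ℝ (Fin d)) k‖ ^ 2 :=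
      Finset.sum_nonneg fun k _ => sq_nonneg _
    nlinarith [Real.sq_sqrt hnn, Real.sqrt_nonneg (∑ k, ‖(n : EuclideanSpace ℝ (Fin d)) k‖ ^ 2)]
  calc ∑ k, (n : EuclideanSpace ℝ (Fin d)) k * (n : EuclideanSpace ℝ (Fin d)) k
      = ∑ k, ‖(n : EuclideanSpace ℝ (Fin d)) k‖ ^ 2 := by
        refine Finset.sum_congr rfl fun k _ => ?_
        rw [Real.norm_eq_abs, sq_abs, sq]
    _ = 1 := h2

private lemma coord_abs_le_one (n : sphere (0 : EuclideanSpace ℝ (Fin d)) 1) (i : Fin d) :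
    |(n : EuclideanSpace ℝ (Fin d)) i| ≤ 1 := by
  have h := sum_sq_coord n
  have h2 : (n : EuclideanSpace ℝ (Fin d)) i * (n : EuclideanSpace ℝ (Fin d)) i ≤ 1 := by
    have := Finset.single_le_sum
      (f := fun k => (n : EuclideanSpace ℝ (Fin d)) k * (n : EuclideanSpace ℝ (Fin d)) k)
      (fun k _ => mul_self_nonneg _) (Finset.mem_univ i)
    rw [h] at this
    simpa using this
  nlinarith [abs_nonneg ((n : EuclideanSpace ℝ (Fin d)) i),
    sq_abs ((n : EuclideanSpace ℝ (Fin d)) i)]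

private lemma continuous_coord (i : Fin d) :
    Continuous fun n : sphere (0 : EuclideanSpace ℝ (Fin d)) 1 =>
      (n : EuclideanSpace ℝ (Fin d)) i :=
  (EuclideanSpace.proj (𝕜 := ℝ) i).continuous.comp continuous_subtype_val

private lemma integrable_coord_prod (i j : Fin d) :
    Integrable (fun n : sphere (0 : EuclideanSpace ℝ (Fin d)) 1 =>
      (n : EuclideanSpace ℝ (Fin d)) i * (n : EuclideanSpace ℝ (Fin d)) j)
      (volume : Measure (EuclideanSpace ℝ (Fin d))).toSphere := by
  refine Integrable.mono' (integrable_const 1)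
    (((continuous_coord i).mul (continuous_coord j)).aestronglyMeasurable) ?_
  refine Eventually.of_forall fun n => ?_
  rw [Real.norm_eq_abs, abs_mul]
  calc |(n : EuclideanSpace ℝ (Fin d)) i| * |(n : EuclideanSpace ℝ (Fin d)) j|
      ≤ 1 * 1 := mul_le_mul (coord_abs_le_one n i) (coord_abs_le_one n j)
        (abs_nonneg _) zero_le_one
    _ = 1 := one_mul 1

private lemma sphere_moment_offdiag {i j : Fin d} (hij : i ≠ j) :
    ∫ n : sphere (0 : EuclideanSpace ℝ (Fin d)) 1,
      (n : EuclideanSpace ℝ (Fin d)) i * (n : EuclideanSpace ℝ (Fin d)) j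
      ∂(volume : Measure (EuclideanSpace ℝ (Fin d))).toSphere = 0 := by
  classical
  set e : EuclideanSpace ℝ (Fin d) ≃ₗᵢ[ℝ] EuclideanSpace ℝ (Fin d) :=
    LinearIsometryEquiv.piLpCongrRight 2
      (fun k : Fin d => if k = j then LinearIsometryEquiv.neg ℝ else
        LinearIsometryEquiv.refl ℝ ℝ) with he
  have happ : ∀ (x : EuclideanSpace ℝ (Fin d)) (k : Fin d),
      e x k = if k = j then -(x k) else x k := by
    intro x k
    rw [he]
    rw [LinearIsometryEquiv.piLpCongrRight_apply, PiLp.toLp_apply]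
    rw [apply_ite (fun g : ℝ ≃ₗᵢ[ℝ] ℝ => g (x k))]
    simp
  have h1 := sphere_integral_comp_isometry e
    (fun x : EuclideanSpace ℝ (Fin d) => x i * x j)
  have h2 : ∀ n : sphere (0 : EuclideanSpace ℝ (Fin d)) 1,
      (e (n : EuclideanSpace ℝ (Fin d))) i * (e (n : EuclideanSpace ℝ (Fin d))) j
        = -((n : EuclideanSpace ℝ (Fin d)) i * (n : EuclideanSpace ℝ (Fin d)) j) := by
    intro n
    rw [happ, happ, if_neg hij, if_pos rfl]
    ring
  rw [integral_congr_ae (Eventually.of_forall fun n => h2 n), integral_neg] at h1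
  linarith

private lemma sphere_moment_diag (i j : Fin d) :
    ∫ n : sphere (0 : EuclideanSpace ℝ (Fin d)) 1,
      (n : EuclideanSpace ℝ (Fin d)) i * (n : EuclideanSpace ℝ (Fin d)) i
      ∂(volume : Measure (EuclideanSpace ℝ (Fin d))).toSphere
    = ∫ n : sphere (0 : EuclideanSpace ℝ (Fin d)) 1,
      (n : EuclideanSpace ℝ (Fin d)) j * (n : EuclideanSpace ℝ (Fin d)) j
      ∂(volume : Measure (EuclideanSpace ℝ (Fin d))).toSphere := by
  classical
  set e : EuclideanSpace ℝ (Fin d) ≃ₗᵢ[ℝ] EuclideanSpace ℝ (Fin d) :=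
    LinearIsometryEquiv.piLpCongrLeft 2 ℝ ℝ (Equiv.swap i j) with he
  have happ : ∀ (x : EuclideanSpace ℝ (Fin d)),
      e x i = x j := by
    intro x
    rw [he, LinearIsometryEquiv.piLpCongrLeft_apply]
    show x ((Equiv.swap i j).symm i) = x j
    rw [Equiv.symm_swap, Equiv.swap_apply_left]
  have h1 := sphere_integral_comp_isometry e
    (fun x : EuclideanSpace ℝ (Fin d) => x i * x i)
  rw [← h1]
  refine integral_congr_ae (Eventually.of_forall fun n => ?_)
  simp only [happ]

private lemma sphere_moment_diag_val (i : Fin d) :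
    ∫ n : sphere (0 : EuclideanSpace ℝ (Fin d)) 1,
      (n : EuclideanSpace ℝ (Fin d)) i * (n : EuclideanSpace ℝ (Fin d)) i
      ∂(volume : Measure (EuclideanSpace ℝ (Fin d))).toSphere
    = (((volume : Measure (EuclideanSpace ℝ (Fin d))).toSphere Set.univ).toReal) / d := by
  have hd : 0 < d := Fin.pos i
  have hsum : ∑ k : Fin d, ∫ n : sphere (0 : EuclideanSpace ℝ (Fin d)) 1,
      (n : EuclideanSpace ℝ (Fin d)) k * (n : EuclideanSpace ℝ (Fin d)) k
      ∂(volume : Measure (EuclideanSpace ℝ (Fin d))).toSphere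
      = (((volume : Measure (EuclideanSpace ℝ (Fin d))).toSphere Set.univ).toReal) := by
    rw [← integral_finset_sum _ (fun k _ => integrable_coord_prod k k)]
    rw [integral_congr_ae (Eventually.of_forall fun n => sum_sq_coord n)]
    simp [Measure.real]
  have hsame : ∀ k : Fin d, ∫ n : sphere (0 : EuclideanSpace ℝ (Fin d)) 1,
      (n : EuclideanSpace ℝ (Fin d)) k * (n : EuclideanSpace ℝ (Fin d)) k
      ∂(volume : Measure (EuclideanSpace ℝ (Fin d))).toSphere
      = ∫ n : sphere (0 : EuclideanSpace ℝ (Fin d)) 1,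
      (n : EuclideanSpace ℝ (Fin d)) i * (n : EuclideanSpace ℝ (Fin d)) i
      ∂(volume : Measure (EuclideanSpace ℝ (Fin d))).toSphere :=
    fun k => sphere_moment_diag k i
  rw [Finset.sum_congr rfl (fun k _ => hsame k), Finset.sum_const, Finset.card_univ,
    Fintype.card_fin, nsmul_eq_mul] at hsum
  rw [eq_div_iff (show (d:ℝ) ≠ 0 from Nat.cast_ne_zero.mpr hd.ne')]
  linarith [hsum]

end Euclid
end Helpers

set_option maxHeartbeats 1600000 in
set_option synthInstance.maxHeartbeats 80000 in
/-- The diffusion coefficient of the limiting nonequilibrium Langevin dynamics: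
`lim_{m→0⁺} C_m I₂(m) = (4 λ R^{d−1} S_{d−1} Φ₃/(M² d)) Id` (entrywise). -/
theorem diffusion_coefficient_limit
    (d : ℕ) (hd : 1 ≤ d)
    (M R lam : ℝ) (hM : 0 < M) (hR : 0 < R) (hlam : 0 < lam)
    (A : EuclideanSpace ℝ (Fin d) →L[ℝ] EuclideanSpace ℝ (Fin d))
    (Q V : EuclideanSpace ℝ (Fin d))
    (f1 : ℝ → ℝ) (hf1_meas : Measurable f1) (hf1_nonneg : ∀ x, 0 ≤ f1 x)
    (hf1_even : ∀ x, f1 (-x) = f1 x)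
    (hf1_prob : ∫ x, f1 x = 1)
    (hf1_mom : ∀ i : ℕ, i ≤ 4 → Integrable (fun x => |x| ^ i * f1 x))
    (Φ : ℕ → ℝ) (hΦ : ∀ i : ℕ, Φ i = (1 / 2) * ∫ x, |x| ^ i * f1 x)
    (S : ℝ)
    (hS : S = ((volume : Measure (EuclideanSpace ℝ (Fin d))).toSphere Set.univ).toReal)
    (C : ℝ → ℝ) (hC : ∀ m, C m = lam * R ^ (d - 1) * ((M + m) / 2) ^ 2)
    (I₂ : ℝ → Fin d → Fin d → ℝ)
    (hI₂ : ∀ (m : ℝ) (i j : Fin d), I₂ m i j =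
      ∫ n, (∫ Vh in Set.Ici ((2 * m / (M + m)) *
            max (m ^ (-(1 : ℝ) / 5) -
              ⟪V - A (Q - R • (n : EuclideanSpace ℝ (Fin d))),
                (n : EuclideanSpace ℝ (Fin d))⟫) 0),
          m ^ (-(2 : ℝ)) * Vh ^ 3 *
            f1 ((M + m) / (2 * m ^ ((1 : ℝ) / 2)) * Vh +
              m ^ ((1 : ℝ) / 2) *
                ⟪V - A (Q - R • (n : EuclideanSpace ℝ (Fin d))),
                  (n : EuclideanSpace ℝ (Fin d))⟫))
        * ((n : EuclideanSpace ℝ (Fin d)) i * (n : EuclideanSpace ℝ (Fin d)) j)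
        ∂((volume : Measure (EuclideanSpace ℝ (Fin d))).toSphere)) :
    ∀ i j : Fin d,
      Filter.Tendsto (fun m => C m * I₂ m i j) (nhdsWithin 0 (Set.Ioi 0))
        (nhds (4 * lam * R ^ (d - 1) * S * Φ 3 / (M ^ 2 * d) *
          (1 : Matrix (Fin d) (Fin d) ℝ) i j)) := by
  
  intro i j
  classical
  have hd0 : (d:ℝ) ≠ 0 := Nat.cast_ne_zero.mpr (by omega)
  have hmom : ∀ k : ℕ, k ≤ 4 → Integrable (fun x : ℝ => x ^ k * f1 x) := by
    intro k hk
    refine (hf1_mom k hk).mono'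
      (((measurable_id.pow_const k).mul hf1_meas).aestronglyMeasurable) ?_
    refine Filter.Eventually.of_forall fun x => le_of_eq ?_
    rw [Real.norm_eq_abs, abs_mul, abs_pow, abs_of_nonneg (hf1_nonneg x)]
  set B : ℕ → ℝ → ℝ := fun k t => ∫ x in Set.Ici t, x ^ k * f1 x with hB
  set Bb : ℕ → ℝ := fun k => ∫ x, |x| ^ k * f1 x with hBb
  have hBcont : ∀ k : ℕ, k ≤ 4 → Continuous (B k) := fun k hk => tail_continuous (hmom k hk)
  have hBbd : ∀ k : ℕ, k ≤ 4 → ∀ t : ℝ, |B k t| ≤ Bb k := by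
    intro k hk t
    exact tail_abs_bound
      (fun x => le_of_eq (by rw [abs_mul, abs_pow, abs_of_nonneg (hf1_nonneg x)]))
      (hf1_mom k hk) (hmom k hk) t
  have hBbnn : ∀ k : ℕ, 0 ≤ Bb k := fun k =>
    integral_nonneg fun x => mul_nonneg (pow_nonneg (abs_nonneg x) k) (hf1_nonneg x)
  have hB30 : B 3 0 = Φ 3 := by
    rw [hΦ 3, even_moment_eq hf1_even 3]
    simp only [hB]
    rw [integral_Ici_eq_integral_Ioi]
    ring
  set aF : (Metric.sphere (0 : EuclideanSpace ℝ (Fin d)) 1) → ℝ :=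
    fun n => ⟪V - A (Q - R • (n : EuclideanSpace ℝ (Fin d))), (n : EuclideanSpace ℝ (Fin d))⟫
    with haF
  have hacont : Continuous aF := by
    rw [haF]
    exact Continuous.inner
      (continuous_const.sub (A.continuous.comp
        (continuous_const.sub (continuous_subtype_val.const_smul R))))
      continuous_subtype_val
  set K : ℝ := ‖V‖ + ‖A‖ * (‖Q‖ + R) with hKdef
  have hK0 : 0 ≤ K := by
    rw [hKdef]; positivity
  have hK : ∀ n, |aF n| ≤ K := by
    intro n
    have hn : ‖(n : EuclideanSpace ℝ (Fin d))‖ = 1 := mem_sphere_zero_iff_norm.mp n.2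
    simp only [haF, hKdef]
    calc |⟪V - A (Q - R • (n : EuclideanSpace ℝ (Fin d))), (n : EuclideanSpace ℝ (Fin d))⟫|
        ≤ ‖V - A (Q - R • (n : EuclideanSpace ℝ (Fin d)))‖ * ‖(n : EuclideanSpace ℝ (Fin d))‖ :=
          abs_real_inner_le_norm _ _
      _ = ‖V - A (Q - R • (n : EuclideanSpace ℝ (Fin d)))‖ := by rw [hn, mul_one]
      _ ≤ ‖V‖ + ‖A (Q - R • (n : EuclideanSpace ℝ (Fin d)))‖ := norm_sub_le _ _
      _ ≤ ‖V‖ + ‖A‖ * ‖Q - R • (n : EuclideanSpace ℝ (Fin d))‖ := by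
          gcongr
          exact A.le_opNorm _
      _ ≤ ‖V‖ + ‖A‖ * (‖Q‖ + R) := by
          gcongr
          calc ‖Q - R • (n : EuclideanSpace ℝ (Fin d))‖
              ≤ ‖Q‖ + ‖R • (n : EuclideanSpace ℝ (Fin d))‖ := norm_sub_le _ _
            _ = ‖Q‖ + R := by rw [norm_smul, hn, mul_one, Real.norm_eq_abs, abs_of_pos hR]
  have point : ∀ m : ℝ, 0 < m → ∀ α : ℝ,
      (∫ Vh in Set.Ici ((2*m/(M+m)) * max (m ^ (-(1:ℝ)/5) - α) 0),
        m ^ (-(2:ℝ)) * Vh^3 * f1 ((M+m)/(2*m^((1:ℝ)/2)) * Vh + m^((1:ℝ)/2) * α))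
      = (16/(M+m)^4) * (B 3 (m^((1:ℝ)/2) * max (m ^ (-(1:ℝ)/5)) α)
          - 3*(m^((1:ℝ)/2)*α)*B 2 (m^((1:ℝ)/2) * max (m ^ (-(1:ℝ)/5)) α)
          + 3*(m^((1:ℝ)/2)*α)^2*B 1 (m^((1:ℝ)/2) * max (m ^ (-(1:ℝ)/5)) α)
          - (m^((1:ℝ)/2)*α)^3*B 0 (m^((1:ℝ)/2) * max (m ^ (-(1:ℝ)/5)) α)) := by
    intro m hm α
    rw [inner_transform M m hM hm α f1,
      tail_cube_expand (hmom 0 (by norm_num)) (hmom 1 (by norm_num))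
        (hmom 2 (by norm_num)) (hmom 3 (by norm_num))]
  set G : ℝ → (Metric.sphere (0 : EuclideanSpace ℝ (Fin d)) 1) → ℝ := fun m n =>
    C m * ((16/(M+m)^4) * (B 3 (m^((1:ℝ)/2) * max (m ^ (-(1:ℝ)/5)) (aF n))
          - 3*(m^((1:ℝ)/2)*(aF n))*B 2 (m^((1:ℝ)/2) * max (m ^ (-(1:ℝ)/5)) (aF n))
          + 3*(m^((1:ℝ)/2)*(aF n))^2*B 1 (m^((1:ℝ)/2) * max (m ^ (-(1:ℝ)/5)) (aF n))
          - (m^((1:ℝ)/2)*(aF n))^3*B 0 (m^((1:ℝ)/2) * max (m ^ (-(1:ℝ)/5)) (aF n))))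
      * ((n : EuclideanSpace ℝ (Fin d)) i * (n : EuclideanSpace ℝ (Fin d)) j) with hG
  have key : ∀ m ∈ Set.Ioi (0:ℝ), C m * I₂ m i j
      = ∫ n, G m n ∂((volume : Measure (EuclideanSpace ℝ (Fin d))).toSphere) := by
    intro m hm
    rw [hI₂ m i j, ← integral_const_mul]
    refine integral_congr_ae (Filter.Eventually.of_forall fun n => ?_)
    simp only [hG, haF]
    rw [point m hm]
    ring
  have hrt : ∀ c : ℝ, 0 < c →
      Filter.Tendsto (fun m : ℝ => m ^ (c:ℝ)) (nhdsWithin 0 (Set.Ioi 0)) (nhds 0) := by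
    intro c hc
    have h1 := (Real.continuousAt_rpow_const 0 c (Or.inr hc.le)).tendsto
    rw [Real.zero_rpow hc.ne'] at h1
    exact h1.mono_left (nhdsWithin_le_nhds (s := Set.Ioi 0))
  have hTt : ∀ n, Filter.Tendsto
      (fun m : ℝ => m^((1:ℝ)/2) * max (m ^ (-(1:ℝ)/5)) (aF n))
      (nhdsWithin 0 (Set.Ioi 0)) (nhds 0) := by
    intro n
    have hup : ∀ᶠ m in nhdsWithin 0 (Set.Ioi 0),
        m^((1:ℝ)/2) * max (m ^ (-(1:ℝ)/5)) (aF n) ≤ m ^ ((3:ℝ)/10) + m^((1:ℝ)/2) * K := by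
      filter_upwards [self_mem_nhdsWithin] with m hm
      have hm' : (0:ℝ) < m := hm
      have hc5 : (0:ℝ) < m ^ (-(1:ℝ)/5) := Real.rpow_pos_of_pos hm' _
      have hmax : max (m ^ (-(1:ℝ)/5)) (aF n) ≤ m ^ (-(1:ℝ)/5) + K :=
        max_le (by linarith) ((le_abs_self _).trans ((hK n).trans (by linarith)))
      have h38 : m^((1:ℝ)/2) * (m ^ (-(1:ℝ)/5)) = m ^ ((3:ℝ)/10) := by
        rw [← Real.rpow_add hm']; norm_num
      calc m^((1:ℝ)/2) * max (m ^ (-(1:ℝ)/5)) (aF n)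
          ≤ m^((1:ℝ)/2) * (m ^ (-(1:ℝ)/5) + K) :=
            mul_le_mul_of_nonneg_left hmax (Real.rpow_nonneg hm'.le _)
        _ = m ^ ((3:ℝ)/10) + m^((1:ℝ)/2) * K := by rw [mul_add, h38]
    have hlow : ∀ᶠ m in nhdsWithin 0 (Set.Ioi 0),
        0 ≤ m^((1:ℝ)/2) * max (m ^ (-(1:ℝ)/5)) (aF n) := by
      filter_upwards [self_mem_nhdsWithin] with m hm
      have hm' : (0:ℝ) < m := hm
      have hc5 : (0:ℝ) < m ^ (-(1:ℝ)/5) := Real.rpow_pos_of_pos hm' _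
      have hmx : (0:ℝ) ≤ max (m ^ (-(1:ℝ)/5)) (aF n) := le_trans hc5.le (le_max_left _ _)
      exact mul_nonneg (Real.rpow_nonneg hm'.le _) hmx
    have hg0 : Filter.Tendsto (fun m : ℝ => m ^ ((3:ℝ)/10) + m^((1:ℝ)/2) * K)
        (nhdsWithin 0 (Set.Ioi 0)) (nhds 0) := by
      have := (hrt ((3:ℝ)/10) (by norm_num)).add ((hrt ((1:ℝ)/2) (by norm_num)).mul_const K)
      simpa using this
    exact squeeze_zero' hlow hup hg0
  have hst : ∀ n, Filter.Tendsto (fun m : ℝ => m^((1:ℝ)/2) * (aF n))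
      (nhdsWithin 0 (Set.Ioi 0)) (nhds 0) := by
    intro n
    have := (hrt ((1:ℝ)/2) (by norm_num)).mul_const (aF n)
    simpa using this
  have hGlim : ∀ n, Filter.Tendsto (fun m => G m n) (nhdsWithin 0 (Set.Ioi 0))
      (nhds ((4*lam*R^(d-1)*Φ 3/M^2)
        * ((n : EuclideanSpace ℝ (Fin d)) i * (n : EuclideanSpace ℝ (Fin d)) j))) := by
    intro n
    have hCt : Filter.Tendsto C (nhdsWithin 0 (Set.Ioi 0))
        (nhds (lam * R^(d-1) * (M/2)^2)) := by
      have hc : Continuous fun m : ℝ => lam * R^(d-1) * ((M+m)/2)^2 :=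
        continuous_const.mul (((continuous_const.add continuous_id).div_const 2).pow 2)
      have h2 := (hc.tendsto 0).mono_left (nhdsWithin_le_nhds (s := Set.Ioi 0) (a := (0:ℝ)))
      rw [add_zero] at h2
      exact Filter.Tendsto.congr (fun m => (hC m).symm) h2
    have h16 : Filter.Tendsto (fun m : ℝ => 16/(M+m)^4) (nhdsWithin 0 (Set.Ioi 0))
        (nhds (16/M^4)) := by
      have hc : Continuous fun m : ℝ => (M+m)^4 :=
        (continuous_const.add continuous_id).pow 4
      have h1 := (hc.tendsto 0).mono_left (nhdsWithin_le_nhds (s := Set.Ioi 0) (a := (0:ℝ)))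
      rw [add_zero] at h1
      exact tendsto_const_nhds.div h1 (pow_ne_zero 4 hM.ne')
    have t3 := ((hBcont 3 (by norm_num)).tendsto 0).comp (hTt n)
    have t2 := ((hBcont 2 (by norm_num)).tendsto 0).comp (hTt n)
    have t1 := ((hBcont 1 (by norm_num)).tendsto 0).comp (hTt n)
    have t0 := ((hBcont 0 (by norm_num)).tendsto 0).comp (hTt n)
    have hs := hst n
    have hP : Filter.Tendsto (fun m : ℝ =>
        B 3 (m^((1:ℝ)/2) * max (m ^ (-(1:ℝ)/5)) (aF n))
          - 3*(m^((1:ℝ)/2)*(aF n))*B 2 (m^((1:ℝ)/2) * max (m ^ (-(1:ℝ)/5)) (aF n))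
          + 3*(m^((1:ℝ)/2)*(aF n))^2*B 1 (m^((1:ℝ)/2) * max (m ^ (-(1:ℝ)/5)) (aF n))
          - (m^((1:ℝ)/2)*(aF n))^3*B 0 (m^((1:ℝ)/2) * max (m ^ (-(1:ℝ)/5)) (aF n)))
        (nhdsWithin 0 (Set.Ioi 0))
        (nhds (B 3 0 - 3*0*B 2 0 + 3*0^2*B 1 0 - 0^3*B 0 0)) :=
      ((t3.sub ((hs.const_mul 3).mul t2)).add
        (((hs.pow 2).const_mul 3).mul t1)).sub ((hs.pow 3).mul t0)
    have hfull := (hCt.mul (h16.mul hP)).mul_const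
      ((n : EuclideanSpace ℝ (Fin d)) i * (n : EuclideanSpace ℝ (Fin d)) j)
    have hval : lam * R^(d-1) * (M/2)^2
        * (16/M^4 * (B 3 0 - 3*0*B 2 0 + 3*0^2*B 1 0 - 0^3*B 0 0))
        * ((n : EuclideanSpace ℝ (Fin d)) i * (n : EuclideanSpace ℝ (Fin d)) j)
        = (4*lam*R^(d-1)*Φ 3/M^2)
        * ((n : EuclideanSpace ℝ (Fin d)) i * (n : EuclideanSpace ℝ (Fin d)) j) := by
      rw [hB30]
      field_simp
      ring
    rw [hval] at hfull
    exact hfull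
  set D0 : ℝ := Bb 3 + 3*K*Bb 2 + 3*K^2*Bb 1 + K^3*Bb 0 with hD0
  set CB : ℝ := lam * R^(d-1) * ((M+1)/2)^2 with hCB
  have hD0nn : 0 ≤ D0 := by
    rw [hD0]
    have h0 := hBbnn 0
    have h1 := hBbnn 1
    have h2 := hBbnn 2
    have h3 := hBbnn 3
    have p2 := mul_nonneg hK0 h2
    have p1 := mul_nonneg (pow_nonneg hK0 2) h1
    have p0 := mul_nonneg (pow_nonneg hK0 3) h0
    nlinarith
  have hDCT : Filter.Tendsto
      (fun m => ∫ n, G m n ∂((volume : Measure (EuclideanSpace ℝ (Fin d))).toSphere))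
      (nhdsWithin 0 (Set.Ioi 0))
      (nhds (∫ n, (4*lam*R^(d-1)*Φ 3/M^2)
        * ((n : EuclideanSpace ℝ (Fin d)) i * (n : EuclideanSpace ℝ (Fin d)) j)
        ∂((volume : Measure (EuclideanSpace ℝ (Fin d))).toSphere))) := by
    refine tendsto_integral_filter_of_dominated_convergence
      (fun _ => CB * ((16/M^4) * D0)) ?_ ?_ (integrable_const _) ?_
    · refine Filter.Eventually.of_forall fun m => ?_
      apply Continuous.aestronglyMeasurable
      have hTm : Continuous fun n : Metric.sphere (0 : EuclideanSpace ℝ (Fin d)) 1 =>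
          m^((1:ℝ)/2) * max (m ^ (-(1:ℝ)/5)) (aF n) :=
        continuous_const.mul (continuous_const.max hacont)
      have hsm : Continuous fun n : Metric.sphere (0 : EuclideanSpace ℝ (Fin d)) 1 =>
          m^((1:ℝ)/2) * (aF n) := continuous_const.mul hacont
      simp only [hG]
      exact (continuous_const.mul (continuous_const.mul
        (((((hBcont 3 (by norm_num)).comp hTm).sub
            ((continuous_const.mul hsm).mul ((hBcont 2 (by norm_num)).comp hTm))).add
          ((continuous_const.mul (hsm.pow 2)).mul ((hBcont 1 (by norm_num)).comp hTm))).sub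
        ((hsm.pow 3).mul ((hBcont 0 (by norm_num)).comp hTm))))).mul
        ((continuous_coord i).mul (continuous_coord j))
    · have hev : Set.Ioo (0:ℝ) 1 ∈ nhdsWithin 0 (Set.Ioi 0) :=
        Ioo_mem_nhdsGT_of_mem (by constructor <;> norm_num)
      filter_upwards [hev] with m hm
      refine Filter.Eventually.of_forall fun n => ?_
      obtain ⟨hm0, hm1⟩ := hm
      rw [Real.norm_eq_abs]
      simp only [hG]
      have hsm1 : m ^ ((1:ℝ)/2) ≤ 1 := Real.rpow_le_one hm0.le hm1.le (by norm_num)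
      have hsK : |m^((1:ℝ)/2) * (aF n)| ≤ K := by
        rw [abs_mul]
        calc |m^((1:ℝ)/2)| * |aF n| ≤ 1 * K := by
              apply mul_le_mul _ (hK n) (abs_nonneg _) zero_le_one
              rw [abs_of_nonneg (Real.rpow_nonneg hm0.le _)]; exact hsm1
          _ = K := one_mul K
      set t := m^((1:ℝ)/2) * max (m ^ (-(1:ℝ)/5)) (aF n) with ht
      set s := m^((1:ℝ)/2) * (aF n) with hsdef
      have hb3 := hBbd 3 (by norm_num) t
      have hb2 := hBbd 2 (by norm_num) t
      have hb1 := hBbd 1 (by norm_num) t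
      have hb0 := hBbd 0 (by norm_num) t
      have hPabs : |B 3 t - 3*s*B 2 t + 3*s^2*B 1 t - s^3*B 0 t| ≤ D0 := by
        have q2 : |3*s*B 2 t| ≤ 3*(K*Bb 2) := by
          rw [abs_mul, abs_mul, abs_of_nonneg (by norm_num : (0:ℝ) ≤ 3), mul_assoc]
          apply mul_le_mul_of_nonneg_left _ (by norm_num : (0:ℝ) ≤ 3)
          exact mul_le_mul hsK hb2 (abs_nonneg _) hK0
        have q1 : |3*s^2*B 1 t| ≤ 3*(K^2*Bb 1) := by
          rw [abs_mul, abs_mul, abs_of_nonneg (by norm_num : (0:ℝ) ≤ 3), mul_assoc, abs_pow]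
          apply mul_le_mul_of_nonneg_left _ (by norm_num : (0:ℝ) ≤ 3)
          exact mul_le_mul (pow_le_pow_left₀ (abs_nonneg s) hsK 2) hb1 (abs_nonneg _)
            (pow_nonneg hK0 2)
        have q0 : |s^3*B 0 t| ≤ K^3*Bb 0 := by
          rw [abs_mul, abs_pow]
          exact mul_le_mul (pow_le_pow_left₀ (abs_nonneg s) hsK 3) hb0 (abs_nonneg _)
            (pow_nonneg hK0 3)
        calc |B 3 t - 3*s*B 2 t + 3*s^2*B 1 t - s^3*B 0 t|
            ≤ |B 3 t - 3*s*B 2 t + 3*s^2*B 1 t| + |s^3*B 0 t| := abs_sub _ _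
          _ ≤ (|B 3 t - 3*s*B 2 t| + |3*s^2*B 1 t|) + |s^3*B 0 t| := by
              have := abs_add_le (B 3 t - 3*s*B 2 t) (3*s^2*B 1 t)
              linarith
          _ ≤ ((|B 3 t| + |3*s*B 2 t|) + |3*s^2*B 1 t|) + |s^3*B 0 t| := by
              have := abs_sub (B 3 t) (3*s*B 2 t)
              linarith
          _ ≤ D0 := by
              rw [hD0]
              linarith
      have hCm : |C m| ≤ CB := by
        rw [hC m, hCB, abs_of_nonneg (by positivity)]
        have h1 : ((M+m)/2)^2 ≤ ((M+1)/2)^2 := by nlinarith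
        have h2 : (0:ℝ) ≤ lam * R^(d-1) := by positivity
        nlinarith
      have h16b : |16/(M+m)^4| ≤ 16/M^4 := by
        rw [abs_of_nonneg (by positivity)]
        have h4 : M^4 ≤ (M+m)^4 := pow_le_pow_left₀ hM.le (by linarith) 4
        exact div_le_div_of_nonneg_left (by norm_num) (by positivity) h4
      have hnij : |(n : EuclideanSpace ℝ (Fin d)) i * (n : EuclideanSpace ℝ (Fin d)) j| ≤ 1 := by
        rw [abs_mul]
        calc |(n : EuclideanSpace ℝ (Fin d)) i| * |(n : EuclideanSpace ℝ (Fin d)) j|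
            ≤ 1 * 1 := mul_le_mul (coord_abs_le_one n i) (coord_abs_le_one n j)
              (abs_nonneg _) zero_le_one
          _ = 1 := one_mul 1
      rw [abs_mul, abs_mul]
      have hinner : |16/(M+m)^4 * (B 3 t - 3*s*B 2 t + 3*s^2*B 1 t - s^3*B 0 t)|
          ≤ (16/M^4) * D0 := by
        rw [abs_mul]
        exact mul_le_mul h16b hPabs (abs_nonneg _) (by positivity)
      calc |C m| * |16/(M+m)^4 * (B 3 t - 3*s*B 2 t + 3*s^2*B 1 t - s^3*B 0 t)|
            * |(n : EuclideanSpace ℝ (Fin d)) i * (n : EuclideanSpace ℝ (Fin d)) j|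
          ≤ (CB * ((16/M^4) * D0)) * 1 := by
            apply mul_le_mul _ hnij (abs_nonneg _) _
            · exact mul_le_mul hCm hinner (abs_nonneg _) (by rw [hCB]; positivity)
            · have : (0:ℝ) ≤ CB := by rw [hCB]; positivity
              positivity
        _ = CB * ((16/M^4) * D0) := mul_one _
    · exact Filter.Eventually.of_forall hGlim
  have hlimval : (∫ n, (4*lam*R^(d-1)*Φ 3/M^2)
      * ((n : EuclideanSpace ℝ (Fin d)) i * (n : EuclideanSpace ℝ (Fin d)) j)
      ∂((volume : Measure (EuclideanSpace ℝ (Fin d))).toSphere))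
      = 4 * lam * R ^ (d - 1) * S * Φ 3 / (M ^ 2 * d) *
          (1 : Matrix (Fin d) (Fin d) ℝ) i j := by
    rw [integral_const_mul]
    by_cases hij : i = j
    · subst hij
      rw [sphere_moment_diag_val i, Matrix.one_apply_eq, hS]
      field_simp
    · rw [sphere_moment_offdiag hij, Matrix.one_apply_ne hij]
      ring
  refine Filter.Tendsto.congr' ?_ (hlimval ▸ hDCT)
  filter_upwards [self_mem_nhdsWithin] with m hm
  exact (key m hm).symm
end
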